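/- arXiv:2007.12338 — 7 statements merged into one kernel-verified Lean document; each statement's English description precedes it below -/
import Mathlib

section
/- Let f : ℝⁿ → ℝ be a measurable symmetric function, let 𝐅 = (F₁,…,Fₙ) and 𝐆 = (G₁,…,Gₙ) be n-tuples of Borel probability measures on ℝ, and let λ ∈ [0,1]. Then λ·D_f(𝐅) + (1−λ)·D_f(𝐆) ⊆ D_f(λ𝐅 + (1−λ)𝐆); that is, for every H ∈ D_f(𝐅) and K ∈ D_f(𝐆), the mixture measure λH + (1−λ)K belongs to D_f of the tuple whose i-th component is λFᵢ + (1−λ)Gᵢ. -/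
open MeasureTheory
open scoped ENNReal BigOperators

noncomputable section

/-- The `f`-aggregation set: laws of `f (X₁,…,Xₙ)` over all couplings with marginals `F`. -/
def aggSetF (n : ℕ) (f : (Fin n → ℝ) → ℝ) (F : Fin n → Measure ℝ) : Set (Measure ℝ) :=
  {H | ∃ μ : Measure (Fin n → ℝ), IsProbabilityMeasure μ ∧
    (∀ i, μ.map (fun x => x i) = F i) ∧ H = μ.map f}

/-- The aggregation set for sums. -/
def aggSet (n : ℕ) (F : Fin n → Measure ℝ) : Set (Measure ℝ) :=
  aggSetF n (fun x => ∑ i, x i) F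

/-- A symmetric function on `ℝⁿ`. -/
def IsSymmetricFn (n : ℕ) (f : (Fin n → ℝ) → ℝ) : Prop :=
  ∀ (π : Equiv.Perm (Fin n)) (x : Fin n → ℝ), f (x ∘ π) = f x

/-- Left-continuous quantile function of a measure on ℝ. -/
def quantile (F : Measure ℝ) (p : ℝ) : ℝ :=
  sInf {x : ℝ | p ≤ (F (Set.Iic x)).toReal}

/-- The uniform probability measure on (0,1). -/
def uniform01 : Measure ℝ := volume.restrict (Set.Ioo (0 : ℝ) 1)

/-- Comonotonic sum F₁ ⊕ ⋯ ⊕ Fₙ : the law of ∑ Fᵢ⁻¹(U), U uniform on (0,1). -/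
def comonoSum (n : ℕ) (F : Fin n → Measure ℝ) : Measure ℝ :=
  uniform01.map (fun u => ∑ i, quantile (F i) u)

/-- Convex order F ≺cx G. -/
def ConvexOrder (F G : Measure ℝ) : Prop :=
  ∀ φ : ℝ → ℝ, ConvexOn ℝ Set.univ φ → Integrable φ F → Integrable φ G →
    ∫ x, φ x ∂F ≤ ∫ x, φ x ∂G

/-- Stochastic order F ≺st G, i.e. F((-∞,x]) ≥ G((-∞,x]) for all x. -/
def StOrder (F G : Measure ℝ) : Prop :=
  ∀ x : ℝ, G (Set.Iic x) ≤ F (Set.Iic x)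

/-- Doubly stochastic matrix. -/
def DoublyStochastic {n : ℕ} (Λ : Matrix (Fin n) (Fin n) ℝ) : Prop :=
  (∀ i j, 0 ≤ Λ i j) ∧ (∀ i, ∑ j, Λ i j = 1) ∧ (∀ j, ∑ i, Λ i j = 1)

/-- Distribution mixture Λ𝐅 : i-th component is ∑ⱼ Λᵢⱼ Fⱼ. -/
def distMix {n : ℕ} (Λ : Matrix (Fin n) (Fin n) ℝ) (F : Fin n → Measure ℝ) :
    Fin n → Measure ℝ :=
  fun i => ∑ j, ENNReal.ofReal (Λ i j) • F j

/-- Quantile mixture Λ⊗𝐅 : i-th component is the law of ∑ⱼ Λᵢⱼ Fⱼ⁻¹(U). -/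
def quantileMix {n : ℕ} (Λ : Matrix (Fin n) (Fin n) ℝ) (F : Fin n → Measure ℝ) :
    Fin n → Measure ℝ :=
  fun i => uniform01.map (fun u => ∑ j, Λ i j * quantile (F j) u)

/-- Worst-case value of a risk measure over the aggregation set, valued in EReal. -/
def worstCase (ρ : Measure ℝ → ℝ) (n : ℕ) (F : Fin n → Measure ℝ) : EReal :=
  sSup ((fun H => ((ρ H : ℝ) : EReal)) '' aggSet n F)

/-- Worst-case Value-at-Risk over the aggregation set, valued in EReal. -/
def worstVaR (p : ℝ) (n : ℕ) (F : Fin n → Measure ℝ) : EReal :=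
  sSup ((fun G => ((quantile G p : ℝ) : EReal)) '' aggSet n F)

/-- The class M_D of distributions with a nonincreasing density on an interval support. -/
def MemMD (F : Measure ℝ) : Prop :=
  ∃ f : ℝ → ℝ, Measurable f ∧ (∀ x, 0 ≤ f x) ∧
    F = volume.withDensity (fun x => ENNReal.ofReal (f x)) ∧
    ∃ s : Set ℝ, s.OrdConnected ∧ (∀ x, x ∉ s → f x = 0) ∧
      (∀ x ∈ s, ∀ y ∈ s, x ≤ y → f y ≤ f x)

/-- The class M_I of distributions with a nondecreasing density on an interval support. -/
def MemMI (F : Measure ℝ) : Prop :=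
  ∃ f : ℝ → ℝ, Measurable f ∧ (∀ x, 0 ≤ f x) ∧
    F = volume.withDensity (fun x => ENNReal.ofReal (f x)) ∧
    ∃ s : Set ℝ, s.OrdConnected ∧ (∀ x, x ∉ s → f x = 0) ∧
      (∀ x ∈ s, ∀ y ∈ s, x ≤ y → f x ≤ f y)

/-- Pareto(α, θ) distribution, via its Lebesgue density α θ^α x^{-(α+1)} on [θ, ∞). -/
def pareto (α θ : ℝ) : Measure ℝ :=
  volume.withDensity
    (fun x => if θ ≤ x then ENNReal.ofReal (α * θ ^ α / x ^ (α + 1)) else 0)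

/-- A monotone risk measure (w.r.t. stochastic order, on probability measures). -/
def MonotoneRisk (ρ : Measure ℝ → ℝ) : Prop :=
  ∀ F G : Measure ℝ, IsProbabilityMeasure F → IsProbabilityMeasure G →
    StOrder F G → ρ F ≤ ρ G

/-- A risk measure consistent with convex order (on finite-mean probability measures). -/
def CxConsistentRisk (ρ : Measure ℝ → ℝ) : Prop :=
  ∀ F G : Measure ℝ, IsProbabilityMeasure F → IsProbabilityMeasure G →
    Integrable id F → Integrable id G → ConvexOrder F G → ρ F ≤ ρ G

/-- Uniform distribution on [a,b]. -/
def unifOn (a b : ℝ) : Measure ℝ :=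
  (ENNReal.ofReal (b - a))⁻¹ • volume.restrict (Set.Icc a b)

/-- Bernoulli distribution with parameter p, as a measure on ℝ. -/
def bern (p : ℝ) : Measure ℝ :=
  ENNReal.ofReal (1 - p) • Measure.dirac (0 : ℝ) + ENNReal.ofReal p • Measure.dirac (1 : ℝ)

/-- The set C(𝐅) of finite-mean distributions dominated by the comonotonic sum in convex order. -/
def CSet (n : ℕ) (F : Fin n → Measure ℝ) : Set (Measure ℝ) :=
  {G | IsProbabilityMeasure G ∧ Integrable id G ∧ ConvexOrder G (comonoSum n F)}


/-- Mixture stability of f-aggregation sets (Lemma 2.1(ii)). -/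
theorem stmt0 (n : ℕ) (f : (Fin n → ℝ) → ℝ) (hf : Measurable f)
    (hsym : IsSymmetricFn n f)
    (F G : Fin n → Measure ℝ)
    (hF : ∀ i, IsProbabilityMeasure (F i)) (hG : ∀ i, IsProbabilityMeasure (G i))
    (lam : ℝ) (hlam0 : 0 ≤ lam) (hlam1 : lam ≤ 1)
    (H K : Measure ℝ) (hH : H ∈ aggSetF n f F) (hK : K ∈ aggSetF n f G) :
    ENNReal.ofReal lam • H + ENNReal.ofReal (1 - lam) • K ∈
      aggSetF n f (fun i => ENNReal.ofReal lam • F i + ENNReal.ofReal (1 - lam) • G i) := by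
  obtain ⟨μ, hμp, hμm, hμf⟩ := hH
  obtain ⟨ν, hνp, hνm, hνf⟩ := hK
  refine ⟨ENNReal.ofReal lam • μ + ENNReal.ofReal (1 - lam) • ν, ?_, ?_, ?_⟩
  · constructor
    simp only [Measure.add_toOuterMeasure, Measure.smul_toOuterMeasure,
      OuterMeasure.coe_add, OuterMeasure.coe_smul, Pi.add_apply, Pi.smul_apply,
      Measure.coe_add, Measure.coe_smul, measure_univ, smul_eq_mul, mul_one]
    rw [← ENNReal.ofReal_add hlam0 (by linarith : (0:ℝ) ≤ 1 - lam)]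
    norm_num
  · intro i
    rw [Measure.map_add _ _ (measurable_pi_apply i),
      Measure.map_smul, Measure.map_smul, hμm, hνm]
  · rw [Measure.map_add _ _ hf, Measure.map_smul, Measure.map_smul, hμf, hνf]

end
end

section
/- Let f : ℝⁿ → ℝ be a measurable symmetric function, let 𝐅 = (F₁,…,Fₙ) be an n-tuple of Borel probability measures on ℝ, and let Λ be an n×n doubly stochastic matrix. Then D_f(𝐅) ⊆ D_f(Λ𝐅). In particular, for the sum function f(x₁,…,xₙ) = x₁+⋯+xₙ, the aggregation set satisfies Dₙ(𝐅) ⊆ Dₙ(Λ𝐅). -/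
open MeasureTheory
open scoped ENNReal BigOperators

noncomputable section

lemma map_finset_sum_meas {ι α β : Type*} [MeasurableSpace α] [MeasurableSpace β]
    {g : α → β} (hg : Measurable g) (s : Finset ι) (μ : ι → Measure α) :
    (∑ i ∈ s, μ i).map g = ∑ i ∈ s, (μ i).map g := by
  induction s using Finset.cons_induction with
  | empty => simp
  | cons a s ha ih => simp [Finset.sum_cons, Measure.map_add _ _ hg, ih]

lemma aggSetF_subset_distMix (n : ℕ) (f : (Fin n → ℝ) → ℝ) (hf : Measurable f)
    (hsym : IsSymmetricFn n f)
    (F : Fin n → Measure ℝ) (hF : ∀ i, IsProbabilityMeasure (F i))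
    (Λ : Matrix (Fin n) (Fin n) ℝ) (hΛ : DoublyStochastic Λ) :
    aggSetF n f F ⊆ aggSetF n f (distMix Λ F) := by
  obtain ⟨w, hw0, hw1, hwΛ⟩ := exists_eq_sum_perm_of_mem_doublyStochastic
    (mem_doublyStochastic_iff_sum.2 ⟨hΛ.1, hΛ.2.1, hΛ.2.2⟩)
  rintro H ⟨μ, hμp, hμm, rfl⟩
  have hT : ∀ σ : Equiv.Perm (Fin n), Measurable (fun x : Fin n → ℝ => x ∘ σ) :=
    fun σ => measurable_pi_lambda _ fun i => measurable_pi_apply _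
  refine ⟨∑ σ : Equiv.Perm (Fin n), ENNReal.ofReal (w σ) • μ.map (fun x => x ∘ σ), ?_, ?_, ?_⟩
  · constructor
    rw [Measure.finset_sum_apply]
    have : ∀ σ : Equiv.Perm (Fin n),
        (ENNReal.ofReal (w σ) • μ.map (fun x => x ∘ σ)) Set.univ = ENNReal.ofReal (w σ) := by
      intro σ
      have : IsProbabilityMeasure (μ.map (fun x : Fin n → ℝ => x ∘ σ)) :=
        Measure.isProbabilityMeasure_map (hT σ).aemeasurable
      simp [this.measure_univ]
    rw [Finset.sum_congr rfl fun σ _ => this σ,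
      ← ENNReal.ofReal_sum_of_nonneg (fun σ _ => hw0 σ), hw1, ENNReal.ofReal_one]
  · intro i
    rw [map_finset_sum_meas (measurable_pi_apply i)]
    have hσ : ∀ σ : Equiv.Perm (Fin n),
        (ENNReal.ofReal (w σ) • μ.map (fun x => x ∘ σ)).map (fun x => x i)
          = ENNReal.ofReal (w σ) • F (σ i) := by
      intro σ
      rw [Measure.map_smul, Measure.map_map (measurable_pi_apply i) (hT σ)]
      have : ((fun x : Fin n → ℝ => x i) ∘ fun x => x ∘ σ) = fun x => x (σ i) := rfl
      rw [this, hμm]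
    rw [Finset.sum_congr rfl fun σ _ => hσ σ]
    have hΛij : ∀ j, Λ i j = ∑ σ : Equiv.Perm (Fin n), w σ * if σ i = j then 1 else 0 := by
      intro j
      rw [← hwΛ]
      simp [Matrix.sum_apply, PEquiv.toMatrix_apply, Equiv.toPEquiv_apply, mul_ite]
    show _ = ∑ j, ENNReal.ofReal (Λ i j) • F j
    have : ∀ j, ENNReal.ofReal (Λ i j) • F j
        = ∑ σ : Equiv.Perm (Fin n), (if σ i = j then ENNReal.ofReal (w σ) else 0) • F j := by
      intro j
      rw [hΛij j, ENNReal.ofReal_sum_of_nonneg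
        (fun σ _ => mul_nonneg (hw0 σ) (by positivity)), Finset.sum_smul]
      congr 1
      ext σ
      split <;> simp [*]
    rw [Finset.sum_congr rfl fun j _ => this j, Finset.sum_comm]
    refine Finset.sum_congr rfl fun σ _ => ?_
    simp
  · rw [map_finset_sum_meas hf]
    have : ∀ σ : Equiv.Perm (Fin n),
        (ENNReal.ofReal (w σ) • μ.map (fun x => x ∘ σ)).map f = ENNReal.ofReal (w σ) • μ.map f := by
      intro σ
      rw [Measure.map_smul, Measure.map_map hf (hT σ)]
      have hfc : (f ∘ fun x : Fin n → ℝ => x ∘ σ) = f := funext fun x => hsym σ x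
      rw [hfc]
    rw [Finset.sum_congr rfl fun σ _ => this σ, ← Finset.sum_smul,
      ← ENNReal.ofReal_sum_of_nonneg (fun σ _ => hw0 σ), hw1, ENNReal.ofReal_one, one_smul]

/-- Theorem 2.1: D_f(𝐅) ⊆ D_f(Λ𝐅), in particular Dₙ(𝐅) ⊆ Dₙ(Λ𝐅). -/
theorem stmt1 (n : ℕ) (f : (Fin n → ℝ) → ℝ) (hf : Measurable f)
    (hsym : IsSymmetricFn n f)
    (F : Fin n → Measure ℝ) (hF : ∀ i, IsProbabilityMeasure (F i))
    (Λ : Matrix (Fin n) (Fin n) ℝ) (hΛ : DoublyStochastic Λ) :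
    aggSetF n f F ⊆ aggSetF n f (distMix Λ F) ∧
      aggSet n F ⊆ aggSet n (distMix Λ F) := by
  refine ⟨aggSetF_subset_distMix n f hf hsym F hF Λ hΛ, ?_⟩
  exact aggSetF_subset_distMix n _ (by fun_prop) (fun π x => by
    simpa using Equiv.sum_comp π (fun i => x i)) F hF Λ hΛ

end
end

section
/- Let 𝐅 = (F₁,…,Fₙ) be an n-tuple of Borel probability measures on ℝ and let Λ be an n×n doubly stochastic matrix. Then Dₙ(Λ𝐅) ⊆ Dₙ(F̄,…,F̄), where F̄ = (1/n)·(F₁ + ⋯ + Fₙ) is the equal-weight mixture of the components of 𝐅. -/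
open MeasureTheory
open scoped ENNReal BigOperators

noncomputable section

lemma map_finset_sum' {α β : Type*} [MeasurableSpace α] [MeasurableSpace β]
    {ι : Type*} (s : Finset ι) (μ : ι → Measure α) {f : α → β} (hf : Measurable f) :
    ((∑ i ∈ s, μ i).map f) = ∑ i ∈ s, (μ i).map f := by
  classical
  induction s using Finset.induction with
  | empty => simp [Measure.map_zero]
  | insert _ _ h ih =>
    rw [Finset.sum_insert h, Finset.sum_insert h, Measure.map_add _ _ hf, ih]

lemma agg_subset_mix (n : ℕ) (hn : 0 < n) (G : Fin n → Measure ℝ) :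
    aggSet n G ⊆ aggSet n (fun _ => (n : ℝ≥0∞)⁻¹ • ∑ i, G i) := by
  haveI : NeZero n := ⟨hn.ne'⟩
  rintro H ⟨μ, hμ, hmarg, rfl⟩
  set f : (Fin n → ℝ) → ℝ := fun x => ∑ i, x i with hfdef
  have hf : Measurable f := by
    apply Finset.measurable_sum
    exact fun i _ => measurable_pi_apply i
  set T : Fin n → (Fin n → ℝ) → (Fin n → ℝ) := fun k x i => x (i + k) with hTdef
  have hT : ∀ k, Measurable (T k) := fun k =>
    measurable_pi_lambda _ (fun i => measurable_pi_apply _)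
  have hfT : ∀ k, f ∘ T k = f := by
    intro k
    funext x
    simp only [Function.comp, hfdef, hTdef]
    exact Fintype.sum_equiv (Equiv.addRight k) _ _ (fun i => rfl)
  have hmapT : ∀ k, (μ.map (T k)).map f = μ.map f := by
    intro k
    rw [Measure.map_map hf (hT k), hfT k]
  refine ⟨(n : ℝ≥0∞)⁻¹ • ∑ k, μ.map (T k), ?_, ?_, ?_⟩
  · constructor
    have huniv : ∀ k, (μ.map (T k)) Set.univ = 1 := by
      intro k
      rw [Measure.map_apply (hT k) MeasurableSet.univ]
      simp [measure_univ]
    rw [Measure.smul_apply, Measure.finset_sum_apply]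
    simp only [huniv, Finset.sum_const, Finset.card_univ, Fintype.card_fin, nsmul_eq_mul,
      mul_one, smul_eq_mul]
    exact ENNReal.inv_mul_cancel (by exact_mod_cast hn.ne') (by simp)
  · intro i
    have hev : Measurable fun x : Fin n → ℝ => x i := measurable_pi_apply i
    rw [Measure.map_smul, map_finset_sum' _ _ hev]
    have hmk : ∀ k, (μ.map (T k)).map (fun x => x i) = G (i + k) := by
      intro k
      rw [Measure.map_map hev (hT k)]
      exact hmarg (i + k)
    simp only [hmk]
    have : ∑ k, G (i + k) = ∑ j, G j :=
      Fintype.sum_equiv (Equiv.addLeft i) _ _ (fun k => rfl)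
    rw [this]
  · rw [Measure.map_smul, map_finset_sum' _ _ hf]
    simp only [hmapT, Finset.sum_const, Finset.card_univ, Fintype.card_fin]
    rw [← Nat.cast_smul_eq_nsmul ℝ≥0∞ n, smul_smul,
      ENNReal.inv_mul_cancel (by exact_mod_cast hn.ne') (by simp), one_smul]

/-- Corollary 2.1: Dₙ(Λ𝐅) ⊆ Dₙ(F̄,…,F̄) with F̄ the equal-weight mixture. -/
theorem stmt2 (n : ℕ) (hn : 0 < n)
    (F : Fin n → Measure ℝ) (hF : ∀ i, IsProbabilityMeasure (F i))
    (Λ : Matrix (Fin n) (Fin n) ℝ) (hΛ : DoublyStochastic Λ) :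
    aggSet n (distMix Λ F) ⊆ aggSet n (fun _ => (n : ℝ≥0∞)⁻¹ • ∑ j, F j) := by
  have key := agg_subset_mix n hn (distMix Λ F)
  have heq : (n : ℝ≥0∞)⁻¹ • ∑ i, distMix Λ F i = (n : ℝ≥0∞)⁻¹ • ∑ j, F j := by
    congr 1
    unfold distMix
    rw [Finset.sum_comm]
    refine Finset.sum_congr rfl (fun j _ => ?_)
    rw [← Finset.sum_smul]
    have h1 : ∑ i, ENNReal.ofReal (Λ i j) = 1 := by
      rw [← ENNReal.ofReal_sum_of_nonneg (fun i _ => hΛ.1 i j), hΛ.2.2 j, ENNReal.ofReal_one]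
    rw [h1, one_smul]
  have hfun : (fun _ : Fin n => (n : ℝ≥0∞)⁻¹ • ∑ j, F j)
      = fun _ : Fin n => (n : ℝ≥0∞)⁻¹ • ∑ i, distMix Λ F i := by
    funext _; rw [heq]
  rw [hfun]
  exact key

end
end

section
/- Let 𝐅 = (F₁,…,Fₙ) be an n-tuple of Borel probability measures on ℝ, each with finite first moment, and let Λ be an n×n doubly stochastic matrix. Then C(𝐅) ⊆ C(Λ𝐅); that is, every finite-mean probability measure G on ℝ with G ≺_cx F₁⊕⋯⊕Fₙ also satisfies G ≺_cx (Λ𝐅)₁⊕⋯⊕(Λ𝐅)ₙ. -/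
open MeasureTheory
open scoped ENNReal BigOperators

noncomputable section

namespace Stmt3Aux

open Set Filter Topology




/-- real-valued cdf -/
def rcdf (F : Measure ℝ) (x : ℝ) : ℝ := (F (Set.Iic x)).toReal

variable {F : Measure ℝ}

lemma rcdf_mono [IsFiniteMeasure F] : Monotone (rcdf F) := fun a b hab =>
  (ENNReal.toReal_le_toReal (measure_ne_top _ _) (measure_ne_top _ _)).mpr
    (measure_mono (Iic_subset_Iic.2 hab))

lemma rcdf_nonneg (x : ℝ) : 0 ≤ rcdf F x := ENNReal.toReal_nonneg

lemma rcdf_le_one [IsProbabilityMeasure F] (x : ℝ) : rcdf F x ≤ 1 := by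
  have := (ENNReal.toReal_le_toReal (measure_ne_top F _) (measure_ne_top F univ)).mpr
    (measure_mono (subset_univ (Iic x)))
  simpa [measure_univ, rcdf] using this

/-- right-continuity consequence -/
lemma le_rcdf_of_gt [IsFiniteMeasure F] {a p : ℝ} (h : ∀ b, a < b → p ≤ rcdf F b) :
    p ≤ rcdf F a := by
  have hseq : Tendsto (fun n : ℕ => F (Iic (a + 1 / (n + 1)))) atTop
      (𝓝 (F (⋂ n : ℕ, Iic (a + 1 / (n + 1))))) := by
    have := tendsto_measure_iInter_atTop (μ := F)
      (s := fun n : ℕ => Iic (a + 1 / (n + 1)))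
      (fun n => measurableSet_Iic.nullMeasurableSet)
      (fun m n hmn => Iic_subset_Iic.2 (by
        have : (1 : ℝ) / (n + 1) ≤ 1 / (m + 1) := by
          apply one_div_le_one_div_of_le <;> [positivity; exact_mod_cast by omega]
        linarith))
      ⟨0, measure_ne_top _ _⟩
    exact this
  have hInter : (⋂ n : ℕ, Iic (a + 1 / (n + 1))) = Iic a := by
    ext x
    simp only [mem_iInter, mem_Iic]
    constructor
    · intro hx
      by_contra hxa
      push_neg at hxa
      obtain ⟨n, hn⟩ := exists_nat_one_div_lt (sub_pos.2 hxa)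
      have := hx n
      push_cast at hn this
      linarith
    · intro hx n
      have : (0:ℝ) < 1 / (n + 1) := by positivity
      linarith
  rw [hInter] at hseq
  have hseq' : Tendsto (fun n : ℕ => rcdf F (a + 1 / (n + 1))) atTop (𝓝 (rcdf F a)) :=
    (ENNReal.tendsto_toReal (measure_ne_top F _)).comp hseq
  refine ge_of_tendsto' hseq' (fun n => h _ ?_)
  have : (0:ℝ) < 1 / (n + 1) := by positivity
  linarith

lemma exists_rcdf_ge [IsProbabilityMeasure F] {p : ℝ} (hp : p < 1) :
    {x : ℝ | p ≤ rcdf F x}.Nonempty := by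
  have h1 : Tendsto (fun x : ℝ => F (Iic x)) atTop (𝓝 (F univ)) :=
    tendsto_measure_Iic_atTop F
  have h2 : Tendsto (fun x : ℝ => rcdf F x) atTop (𝓝 1) := by
    have := (ENNReal.tendsto_toReal (measure_ne_top F univ)).comp h1
    simpa [measure_univ, rcdf, Function.comp_def] using this
  have := h2.eventually_const_le hp
  obtain ⟨x, hx⟩ := this.exists
  exact ⟨x, hx⟩

lemma exists_rcdf_lt [IsProbabilityMeasure F] {p : ℝ} (hp : 0 < p) :
    ∃ a : ℝ, rcdf F a < p := by
  have hseq : Tendsto (fun n : ℕ => F (Iic (-(n : ℝ)))) atTop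
      (𝓝 (F (⋂ n : ℕ, Iic (-(n : ℝ))))) :=
    tendsto_measure_iInter_atTop (fun n => measurableSet_Iic.nullMeasurableSet)
      (fun m n hmn => Iic_subset_Iic.2 (by exact_mod_cast neg_le_neg (by exact_mod_cast hmn)))
      ⟨0, measure_ne_top _ _⟩
  have hInter : (⋂ n : ℕ, Iic (-(n : ℝ))) = ∅ := by
    ext x
    simp only [mem_iInter, mem_Iic, mem_empty_iff_false, iff_false, not_forall, not_le]
    obtain ⟨n, hn⟩ := exists_nat_gt (-x)
    exact ⟨n, by linarith⟩
  rw [hInter] at hseq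
  have hseq' : Tendsto (fun n : ℕ => rcdf F (-(n : ℝ))) atTop (𝓝 0) := by
    have := (ENNReal.tendsto_toReal (by simp : F (∅ : Set ℝ) ≠ ⊤)).comp hseq
    simpa [rcdf, Function.comp_def] using this
  have := hseq'.eventually_lt_const hp
  obtain ⟨n, hn⟩ := this.exists
  exact ⟨-(n : ℝ), hn⟩

lemma bddBelow_rcdfSet [IsProbabilityMeasure F] {p : ℝ} (hp : 0 < p) :
    BddBelow {x : ℝ | p ≤ rcdf F x} := by
  obtain ⟨a, ha⟩ := exists_rcdf_lt (F := F) hp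
  refine ⟨a, fun x hx => ?_⟩
  by_contra hax
  push_neg at hax
  exact absurd (le_trans hx (rcdf_mono hax.le)) (not_le.2 ha)

lemma le_rcdf_quantile [IsProbabilityMeasure F] {p : ℝ} (hp : 0 < p) (hp1 : p < 1) :
    p ≤ rcdf F (quantile F p) := by
  refine le_rcdf_of_gt (fun b hb => ?_)
  obtain ⟨y, hy, hyb⟩ := (csInf_lt_iff (bddBelow_rcdfSet hp) (exists_rcdf_ge hp1)).1 hb
  exact le_trans hy (rcdf_mono hyb.le)

lemma quantile_le_iff [IsProbabilityMeasure F] {p x : ℝ} (hp : 0 < p) (hp1 : p < 1) :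
    quantile F p ≤ x ↔ p ≤ rcdf F x := by
  constructor
  · intro h
    exact le_trans (le_rcdf_quantile hp hp1) (rcdf_mono h)
  · intro h
    exact csInf_le (bddBelow_rcdfSet hp) h

lemma monotoneOn_quantile [IsProbabilityMeasure F] :
    MonotoneOn (quantile F) (Ioo (0:ℝ) 1) := by
  intro p hp q hq hpq
  exact csInf_le_csInf (bddBelow_rcdfSet hp.1) (exists_rcdf_ge hq.2)
    (fun x hx => le_trans hpq hx)

lemma aemeasurable_quantile [IsProbabilityMeasure F] :
    AEMeasurable (quantile F) uniform01 :=
  aemeasurable_restrict_of_monotoneOn measurableSet_Ioo monotoneOn_quantile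

instance : IsProbabilityMeasure uniform01 := by
  constructor
  rw [uniform01, Measure.restrict_apply MeasurableSet.univ, Set.univ_inter, Real.volume_Ioo]
  norm_num

lemma map_quantile [IsProbabilityMeasure F] : uniform01.map (quantile F) = F := by
  refine Measure.ext_of_Iic _ _ (fun x => ?_)
  rw [Measure.map_apply_of_aemeasurable aemeasurable_quantile measurableSet_Iic]
  rw [uniform01, Measure.restrict_apply' measurableSet_Ioo]
  set c := rcdf F x with hc
  have hc0 : 0 ≤ c := rcdf_nonneg x
  have hkey : ∀ u ∈ Ioo (0:ℝ) 1, (quantile F u ≤ x ↔ u ≤ c) := by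
    intro u hu
    exact quantile_le_iff hu.1 hu.2
  rcases le_or_gt 1 c with h1 | h1
  · have : quantile F ⁻¹' Iic x ∩ Ioo 0 1 = Ioo (0:ℝ) 1 := by
      ext u
      simp only [mem_inter_iff, mem_preimage, mem_Iic, mem_Ioo]
      constructor
      · rintro ⟨_, hu⟩; exact hu
      · intro hu; exact ⟨(hkey u hu).2 (by linarith [hu.2]), hu⟩
    rw [this, Real.volume_Ioo]
    have hcle : c ≤ 1 := rcdf_le_one x
    have : c = 1 := le_antisymm hcle h1
    have hF1 : F (Iic x) = 1 := by
      have hne := measure_ne_top F (Iic x)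
      rw [hc, rcdf] at this
      exact (ENNReal.toReal_eq_one_iff _).1 this
    rw [hF1]; norm_num
  · have : quantile F ⁻¹' Iic x ∩ Ioo 0 1 = Ioc (0:ℝ) c := by
      ext u
      simp only [mem_inter_iff, mem_preimage, mem_Iic, mem_Ioo, mem_Ioc]
      constructor
      · rintro ⟨h1', h2⟩; exact ⟨h2.1, (hkey u h2).1 h1'⟩
      · rintro ⟨hu0, huc⟩
        have hu1 : u < 1 := lt_of_le_of_lt huc h1
        exact ⟨(hkey u ⟨hu0, hu1⟩).2 huc, hu0, hu1⟩
    rw [this, Real.volume_Ioc]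
    rw [hc, rcdf, sub_zero, ENNReal.ofReal_toReal (measure_ne_top F _)]

lemma integral_quantile_comp [IsProbabilityMeasure F] {f : ℝ → ℝ} (hf : Continuous f) :
    ∫ u, f (quantile F u) ∂uniform01 = ∫ x, f x ∂F := by
  have h := integral_map (μ := uniform01) (φ := quantile F) aemeasurable_quantile
    (f := f) hf.aestronglyMeasurable
  rw [map_quantile] at h
  exact h.symm

lemma integrable_comp_quantile [IsProbabilityMeasure F] {f : ℝ → ℝ} (hf : Continuous f)
    (hint : Integrable f F) : Integrable (fun u => f (quantile F u)) uniform01 := by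
  have hmap := map_quantile (F := F)
  have hsm : AEStronglyMeasurable f (uniform01.map (quantile F)) := by
    rw [hmap]; exact hf.aestronglyMeasurable
  have h := integrable_map_measure (μ := uniform01) (f := quantile F) (g := f)
    hsm aemeasurable_quantile
  rw [hmap] at h
  exact h.1 hint

lemma integrable_quantile [IsProbabilityMeasure F] (hint : Integrable id F) :
    Integrable (quantile F) uniform01 := by
  have := integrable_comp_quantile (F := F) (f := fun x => x) continuous_id hint
  simpa using this





lemma integrable_smul_measure' {μ : Measure ℝ} {f : ℝ → ℝ} (c : ℝ≥0∞) (hc : c ≠ ⊤)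
    (h : Integrable f μ) : Integrable f (c • μ) := by
  rcases eq_or_ne c 0 with rfl | h0
  · simp
  · exact (integrable_smul_measure h0 hc).2 h

variable {n : ℕ} {Λ : Matrix (Fin n) (Fin n) ℝ} {F : Fin n → Measure ℝ}

lemma distMix_isProb (hΛ : DoublyStochastic Λ) (hF : ∀ i, IsProbabilityMeasure (F i)) (i : Fin n) :
    IsProbabilityMeasure (distMix Λ F i) := by
  constructor
  rw [distMix, Measure.finset_sum_apply]
  have : ∀ j ∈ Finset.univ, (ENNReal.ofReal (Λ i j) • F j) univ = ENNReal.ofReal (Λ i j) := by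
    intro j _
    rw [Measure.smul_apply, (hF j).measure_univ, smul_eq_mul, mul_one]
  rw [Finset.sum_congr rfl this, ← ENNReal.ofReal_sum_of_nonneg (fun j _ => hΛ.1 i j), hΛ.2.1 i]
  simp

lemma integrable_distMix {f : ℝ → ℝ} (hfi : ∀ j, Integrable f (F j)) (i : Fin n) :
    Integrable f (distMix Λ F i) := by
  rw [distMix]
  exact integrable_finset_sum_measure.2
    (fun j _ => integrable_smul_measure' _ ENNReal.ofReal_ne_top (hfi j))

lemma integral_distMix (hΛ0 : ∀ i j, 0 ≤ Λ i j) {f : ℝ → ℝ} (hfi : ∀ j, Integrable f (F j))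
    (i : Fin n) :
    ∫ x, f x ∂(distMix Λ F i) = ∑ j, Λ i j * ∫ x, f x ∂(F j) := by
  rw [distMix, integral_finset_sum_measure
    (fun j _ => integrable_smul_measure' _ ENNReal.ofReal_ne_top (hfi j))]
  refine Finset.sum_congr rfl (fun j _ => ?_)
  rw [integral_smul_measure, ENNReal.toReal_ofReal (hΛ0 i j), smul_eq_mul]





/-- left subderivative of a convex function -/
def lsub (φ : ℝ → ℝ) (x : ℝ) : ℝ :=
  sSup ((fun y => (φ x - φ y) / (x - y)) '' Iio x)

variable {φ : ℝ → ℝ}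

lemma slope3 (hφ : ConvexOn ℝ univ φ) {x y z : ℝ} (hxy : x < y) (hyz : y < z) :
    (φ y - φ x) / (y - x) ≤ (φ z - φ y) / (z - y) :=
  hφ.slope_mono_adjacent (mem_univ x) (mem_univ z) hxy hyz

lemma lsub_nonempty (x : ℝ) : ((fun y => (φ x - φ y) / (x - y)) '' Iio x).Nonempty :=
  ⟨_, ⟨x - 1, by norm_num, rfl⟩⟩

lemma lsub_bddAbove (hφ : ConvexOn ℝ univ φ) (x : ℝ) :
    BddAbove ((fun y => (φ x - φ y) / (x - y)) '' Iio x) := by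
  refine ⟨(φ (x + 1) - φ x) / (x + 1 - x), ?_⟩
  rintro s ⟨y, hy, rfl⟩
  have h3 := slope3 hφ hy (by linarith : x < x + 1)
  calc (φ x - φ y) / (x - y) = (φ x - φ y) / (x - y) := rfl
    _ ≤ _ := h3

lemma slope_le_lsub (hφ : ConvexOn ℝ univ φ) {x y : ℝ} (hy : y < x) :
    (φ x - φ y) / (x - y) ≤ lsub φ x :=
  le_csSup (lsub_bddAbove hφ x) ⟨y, hy, rfl⟩

lemma lsub_le_slope (hφ : ConvexOn ℝ univ φ) {x z : ℝ} (hz : x < z) :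
    lsub φ x ≤ (φ z - φ x) / (z - x) := by
  refine csSup_le (lsub_nonempty x) ?_
  rintro s ⟨y, hy, rfl⟩
  exact slope3 hφ hy hz

/-- supporting line inequality -/
lemma lsub_support (hφ : ConvexOn ℝ univ φ) (x y : ℝ) :
    φ x + lsub φ x * (y - x) ≤ φ y := by
  rcases lt_trichotomy y x with h | rfl | h
  · have h1 := slope_le_lsub hφ h
    have hd : (0:ℝ) < x - y := by linarith
    have := mul_le_mul_of_nonneg_right h1 (le_of_lt hd)
    rw [div_mul_cancel₀ _ (ne_of_gt hd)] at this
    nlinarith [this]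
  · simp
  · have h1 := lsub_le_slope hφ h
    have hd : (0:ℝ) < y - x := by linarith
    have := mul_le_mul_of_nonneg_right h1 (le_of_lt hd)
    rw [div_mul_cancel₀ _ (ne_of_gt hd)] at this
    linarith

lemma lsub_monotone (hφ : ConvexOn ℝ univ φ) : Monotone (lsub φ) := by
  intro x x' hxx'
  rcases eq_or_lt_of_le hxx' with rfl | h
  · exact le_rfl
  · calc lsub φ x ≤ (φ x' - φ x) / (x' - x) := by
          refine csSup_le (lsub_nonempty x) ?_
          rintro s ⟨y, hy, rfl⟩
          have := slope3 hφ hy h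
          exact this
      _ ≤ lsub φ x' := slope_le_lsub hφ h

lemma abs_lsub_le (hφ : ConvexOn ℝ univ φ) {L : ℝ}
    (hL : ∀ a b : ℝ, |φ a - φ b| ≤ L * |a - b|) (x : ℝ) : |lsub φ x| ≤ L := by
  have hL0 : 0 ≤ L := by
    have := hL 0 1
    simp at this
    calc (0:ℝ) ≤ |φ 0 - φ 1| := abs_nonneg _
      _ ≤ L := by simpa using hL 0 1
  have hub : lsub φ x ≤ L := by
    refine csSup_le (lsub_nonempty x) ?_
    rintro s ⟨y, (hy : y < x), rfl⟩
    have hd : (0:ℝ) < x - y := by linarith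
    rw [div_le_iff₀ hd]
    calc φ x - φ y ≤ |φ x - φ y| := le_abs_self _
      _ ≤ L * |x - y| := hL x y
      _ = L * (x - y) := by rw [abs_of_pos hd]
  have hlb : -L ≤ lsub φ x := by
    have h1 := slope_le_lsub hφ (show x - 1 < x by linarith)
    refine le_trans ?_ h1
    have hd : (0:ℝ) < x - (x - 1) := by norm_num
    rw [le_div_iff₀ hd]
    calc -L * (x - (x - 1)) = -(L * |x - (x-1)|) := by rw [abs_of_pos hd]; ring
      _ ≤ -|φ x - φ (x - 1)| := neg_le_neg (hL x (x-1))
      _ ≤ φ x - φ (x - 1) := neg_abs_le _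
  rw [abs_le]; exact ⟨hlb, hub⟩

/-- a countable dense sequence in ℝ -/
def ratSeq : ℕ → ℝ := TopologicalSpace.denseSeq ℝ

lemma ratSeq_dense {x δ : ℝ} (hδ : 0 < δ) : ∃ k, x - δ < ratSeq k ∧ ratSeq k ≤ x := by
  have hd := TopologicalSpace.denseRange_denseSeq ℝ
  obtain ⟨k, hk⟩ := hd.exists_mem_open isOpen_Ioo
    (Set.nonempty_Ioo.2 (show x - δ < x by linarith))
  exact ⟨k, hk.1, hk.2.le⟩

/-- tangent line of φ at d -/
def tangent (φ : ℝ → ℝ) (d : ℝ) : ℝ → ℝ := fun x => φ d + lsub φ d * (x - d)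

/-- increasing maxima of tangent lines at rational points -/
def tangentMax (φ : ℝ → ℝ) : ℕ → ℝ → ℝ
  | 0 => tangent φ (ratSeq 0)
  | (k+1) => fun x => max (tangentMax φ k x) (tangent φ (ratSeq (k+1)) x)

lemma convexOn_tangent (d : ℝ) : ConvexOn ℝ univ (tangent φ d) := by
  refine ⟨convex_univ, fun x _ y _ a b ha hb hab => le_of_eq ?_⟩
  simp only [tangent, smul_eq_mul]
  have hb1 : b = 1 - a := by linarith
  subst hb1
  ring

lemma convexOn_tangentMax (k : ℕ) : ConvexOn ℝ univ (tangentMax φ k) := by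
  induction k with
  | zero => exact convexOn_tangent _
  | succ k ih =>
    have := ih.sup (convexOn_tangent (φ := φ) (ratSeq (k+1)))
    exact this

lemma continuous_tangentMax (k : ℕ) : Continuous (tangentMax φ k) := by
  induction k with
  | zero => exact (continuous_const.add (continuous_const.mul (continuous_id.sub continuous_const)))
  | succ k ih =>
    exact ih.max (continuous_const.add (continuous_const.mul (continuous_id.sub continuous_const)))

lemma tangentMax_le (hφ : ConvexOn ℝ univ φ) (k : ℕ) (x : ℝ) : tangentMax φ k x ≤ φ x := by
  induction k with
  | zero => exact lsub_support hφ _ _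
  | succ k ih => exact max_le ih (lsub_support hφ _ _)

lemma tangentMax_mono (k : ℕ) (x : ℝ) : tangentMax φ k x ≤ tangentMax φ (k+1) x :=
  le_max_left _ _

lemma tangentMax_lipschitz (k : ℕ) : ∃ L : ℝ, 0 ≤ L ∧
    ∀ a b : ℝ, |tangentMax φ k a - tangentMax φ k b| ≤ L * |a - b| := by
  induction k with
  | zero =>
    refine ⟨|lsub φ (ratSeq 0)|, abs_nonneg _, fun a b => ?_⟩
    simp only [tangentMax, tangent]
    rw [show φ (ratSeq 0) + lsub φ (ratSeq 0) * (a - ratSeq 0) -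
        (φ (ratSeq 0) + lsub φ (ratSeq 0) * (b - ratSeq 0)) = lsub φ (ratSeq 0) * (a - b) by ring,
      abs_mul]
  | succ k ih =>
    obtain ⟨L, hL0, hL⟩ := ih
    refine ⟨max L |lsub φ (ratSeq (k+1))|, le_max_of_le_left hL0, fun a b => ?_⟩
    simp only [tangentMax]
    refine le_trans (abs_max_sub_max_le_max _ _ _ _) ?_
    refine max_le ?_ ?_
    · exact le_trans (hL a b) (by gcongr; exact le_max_left _ _)
    · rw [show tangent φ (ratSeq (k+1)) a - tangent φ (ratSeq (k+1)) b
          = lsub φ (ratSeq (k+1)) * (a - b) by simp only [tangent]; ring, abs_mul]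
      gcongr
      exact le_max_right _ _

lemma tangentMax_tendsto (hφ : ConvexOn ℝ univ φ) (x : ℝ) :
    Tendsto (fun k => tangentMax φ k x) atTop (𝓝 (φ x)) := by
  have hmono : Monotone fun k => tangentMax φ k x :=
    monotone_nat_of_le_succ (fun k => tangentMax_mono k x)
  have hbdd : BddAbove (Set.range fun k => tangentMax φ k x) :=
    ⟨φ x, by rintro s ⟨k, rfl⟩; exact tangentMax_le hφ k x⟩
  have h1 := tendsto_atTop_ciSup hmono hbdd
  have hsup : (⨆ k, tangentMax φ k x) = φ x := by
    refine le_antisymm (ciSup_le (fun k => tangentMax_le hφ k x)) ?_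
    by_contra h
    push_neg at h
    set ε := φ x - ⨆ k, tangentMax φ k x with hε
    have hε0 : 0 < ε := by linarith
    -- find a rational point close below x giving a tangent value > φ x - ε
    set M := max (|lsub φ x|) (|lsub φ (x-1)|) with hM
    have hM0 : 0 ≤ M := le_max_of_le_left (abs_nonneg _)
    set δ := min 1 (ε / (2 * M + 1)) with hδ
    have hδ0 : 0 < δ := by
      apply lt_min one_pos
      positivity
    obtain ⟨k, hk1, hk2⟩ := ratSeq_dense (x := x) hδ0
    set d := ratSeq k with hd
    -- bound |lsub φ d| ≤ M since x - 1 ≤ d ≤ x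
    have hdx : d ≤ x := hk2
    have hdx1 : x - 1 ≤ d := by
      have : δ ≤ 1 := min_le_left _ _
      linarith
    have hlb : lsub φ (x-1) ≤ lsub φ d := lsub_monotone hφ hdx1
    have hub : lsub φ d ≤ lsub φ x := lsub_monotone hφ hdx
    have habs : |lsub φ d| ≤ M := by
      rw [abs_le]
      constructor
      · calc -M ≤ -|lsub φ (x-1)| := neg_le_neg (le_max_of_le_right le_rfl)
          _ ≤ lsub φ (x-1) := neg_abs_le _
          _ ≤ lsub φ d := hlb
      · calc lsub φ d ≤ lsub φ x := hub
          _ ≤ |lsub φ x| := le_abs_self _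
          _ ≤ M := le_max_left _ _
    -- φ d ≥ φ x + lsub φ x * (d - x) ≥ φ x - M * δ
    have hsupp := lsub_support hφ x d
    have htang : tangent φ d x ≥ φ x - (2*M) * δ := by
      simp only [tangent]
      have h1 : φ d ≥ φ x + lsub φ x * (d - x) := hsupp
      have h2 : lsub φ x * (d - x) ≥ -(M * δ) := by
        have hxd : |d - x| ≤ δ := by rw [abs_le]; constructor <;> linarith
        have := abs_mul (lsub φ x) (d - x)
        have h3 : |lsub φ x * (d - x)| ≤ M * δ := by
          rw [abs_mul]
          apply mul_le_mul (le_max_left _ _) hxd (abs_nonneg _) hM0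
        linarith [neg_abs_le (lsub φ x * (d - x))]
      have h4 : lsub φ d * (x - d) ≥ -(M * δ) := by
        have hxd : |x - d| ≤ δ := by rw [abs_le]; constructor <;> linarith
        have h3 : |lsub φ d * (x - d)| ≤ M * δ :=
          by rw [abs_mul]; exact mul_le_mul habs hxd (abs_nonneg _) hM0
        linarith [neg_abs_le (lsub φ d * (x - d))]
      linarith
    have hδε : (2*M) * δ < ε := by
      have h1 : δ ≤ ε / (2*M+1) := min_le_right _ _
      have h2 : (2*M) * δ ≤ (2*M) * (ε / (2*M+1)) := by
        apply mul_le_mul_of_nonneg_left h1 (by linarith)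
      have h3 : (2*M) * (ε / (2*M+1)) < ε := by
        rw [mul_div_assoc'] -- (2M*ε)/(2M+1)
        rw [div_lt_iff₀ (by linarith : (0:ℝ) < 2*M+1)]
        nlinarith
      linarith
    -- tangent φ d x ≤ tangentMax at index k... need: tangent value ≤ ⨆
    have hle : tangent φ d x ≤ ⨆ k, tangentMax φ k x := by
      have h5 : tangent φ d x ≤ tangentMax φ k x := by
        cases k with
        | zero => simp [tangentMax, hd]
        | succ k' => exact le_max_right _ _
      exact le_trans h5 (le_ciSup hbdd k)
    have : φ x - ε < φ x - (2*M) * δ := by linarith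
    have : φ x - ε < tangent φ d x := lt_of_lt_of_le this htang
    have hcontra : φ x - ε < ⨆ k, tangentMax φ k x := lt_of_lt_of_le this hle
    rw [hε] at hcontra
    linarith
  rwa [hsup] at h1





instance inst_s3 : IsProbabilityMeasure uniform01 := by
  constructor
  rw [uniform01, Measure.restrict_apply MeasurableSet.univ, Set.univ_inter, Real.volume_Ioo]
  norm_num

lemma uniform01_restrict (p : ℝ) :
    uniform01.restrict (Ioi p) = volume.restrict (Ioi p ∩ Ioo 0 1) := by
  rw [uniform01, Measure.restrict_restrict measurableSet_Ioi]

lemma uniform01_restrict_nonpos {p : ℝ} (hp : p ≤ 0) :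
    uniform01.restrict (Ioi p) = uniform01 := by
  rw [uniform01_restrict, uniform01]
  congr 1
  ext u
  simp only [mem_inter_iff, mem_Ioi, mem_Ioo]
  constructor
  · rintro ⟨-, hu⟩
    exact hu
  · intro hu
    exact ⟨lt_of_le_of_lt hp hu.1, hu⟩

lemma uniform01_restrict_one_le {p : ℝ} (hp : 1 ≤ p) :
    uniform01.restrict (Ioi p) = 0 := by
  rw [uniform01_restrict]
  have : Ioi p ∩ Ioo 0 1 = (∅ : Set ℝ) := by
    ext u
    simp only [mem_inter_iff, mem_Ioi, mem_Ioo, mem_empty_iff_false, iff_false]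
    rintro ⟨h1, h2, h3⟩
    linarith
  rw [this, Measure.restrict_empty]

lemma tail_chunk {f : ℝ → ℝ} (hf : Integrable f uniform01) {a b : ℝ} (hab : a ≤ b) :
    ∫ u, f u ∂(uniform01.restrict (Ioc a b)) =
      (∫ u, f u ∂(uniform01.restrict (Ioi a))) - ∫ u, f u ∂(uniform01.restrict (Ioi b)) := by
  have hu : Ioc a b ∪ Ioi b = Ioi a := Ioc_union_Ioi_eq_Ioi hab
  have hd : Disjoint (Ioc a b) (Ioi b) := by
    rw [disjoint_left]
    intro x hx1 hx2
    exact absurd hx1.2 (not_le.2 hx2)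
  have h := setIntegral_union hd measurableSet_Ioi hf.integrableOn hf.integrableOn
  rw [hu] at h
  rw [h]
  ring

/-- Abel summation algebra -/
lemma abel_alg (v H : ℕ → ℝ) (hv : ∀ j, v j ≤ v (j+1)) (hH : ∀ j, 0 ≤ H j) (N : ℕ) :
    v 0 * H 0 ≤ (∑ j ∈ Finset.range N, v j * (H j - H (j+1))) + v N * H N := by
  induction N with
  | zero => simp
  | succ N ih =>
    rw [Finset.sum_range_succ]
    have h1 : v N * H (N+1) ≤ v (N+1) * H (N+1) := mul_le_mul_of_nonneg_right (hv N) (hH _)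
    linarith

/-- grid point -/
def grid (k j : ℕ) : ℝ := (j : ℝ) / ((k : ℝ) + 1)

lemma grid_mono (k : ℕ) {i j : ℕ} (hij : i ≤ j) : grid k i ≤ grid k j := by
  rw [grid, grid]
  have hij' : ((i:ℝ)) ≤ (j:ℝ) := by exact_mod_cast hij
  gcongr

lemma grid_nonneg (k j : ℕ) : 0 ≤ grid k j := by
  rw [grid]
  positivity

lemma grid_last (k : ℕ) : grid k (k+1) = 1 := by
  rw [grid]
  push_cast
  field_simp

/-- step approximation of D from the left on grid of mesh 1/(k+1) -/
def stepD (D : ℝ → ℝ) (k : ℕ) : ℝ → ℝ := fun u =>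
  ∑ j ∈ Finset.range (k+1), (Ioc (grid k j) (grid k (j+1))).indicator
    (fun _ => D (grid k j)) u

lemma cell_unique {k : ℕ} {i j : ℕ} {u : ℝ} (hi : u ∈ Ioc (grid k i) (grid k (i+1)))
    (hj : u ∈ Ioc (grid k j) (grid k (j+1))) : i = j := by
  by_contra hij
  rcases Nat.lt_or_ge i j with h | h
  · have h1 : grid k (i+1) ≤ grid k j := grid_mono k (by omega)
    linarith [hi.2, hj.1]
  · have hji : j < i := by omega
    have h1 : grid k (j+1) ≤ grid k i := grid_mono k (by omega)
    linarith [hi.1, hj.2]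

lemma stepD_eq {D : ℝ → ℝ} {k j : ℕ} (hj : j ∈ Finset.range (k+1)) {u : ℝ}
    (hu : u ∈ Ioc (grid k j) (grid k (j+1))) : stepD D k u = D (grid k j) := by
  rw [stepD]
  rw [Finset.sum_eq_single_of_mem j hj]
  · rw [indicator_of_mem hu]
  · intro i _ hij
    apply indicator_of_notMem
    intro hmem
    exact hij (cell_unique hmem hu)

lemma stepD_abs_le {D : ℝ → ℝ} {L : ℝ} (hDb : ∀ u, |D u| ≤ L) (k : ℕ) (u : ℝ) :
    |stepD D k u| ≤ L := by
  have hL0 : 0 ≤ L := le_trans (abs_nonneg _) (hDb 0)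
  by_cases hmem : ∃ j ∈ Finset.range (k+1), u ∈ Ioc (grid k j) (grid k (j+1))
  · obtain ⟨j, hj, hu⟩ := hmem
    rw [stepD_eq hj hu]
    exact hDb _
  · push_neg at hmem
    have : stepD D k u = 0 := by
      rw [stepD]
      apply Finset.sum_eq_zero
      intro j hj
      exact indicator_of_notMem (hmem j hj) _
    rw [this]
    simpa using hL0

lemma measurable_stepD (D : ℝ → ℝ) (k : ℕ) : Measurable (stepD D k) := by
  apply Finset.measurable_sum
  intro j _
  exact (measurable_const.indicator measurableSet_Ioc)

/-- key positivity via summation by parts and dominated convergence -/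
lemma abel_step {L : ℝ} {D h : ℝ → ℝ} (hD : Monotone D) (hDb : ∀ u, |D u| ≤ L)
    (hh : Integrable h uniform01)
    (hH : ∀ p : ℝ, 0 ≤ p → 0 ≤ ∫ u, h u ∂(uniform01.restrict (Ioi p)))
    (hH0 : ∫ u, h u ∂uniform01 = 0) :
    0 ≤ ∫ u, D u * h u ∂uniform01 := by
  set H : ℝ → ℝ := fun p => ∫ u, h u ∂(uniform01.restrict (Ioi p)) with hHdef
  -- integral of step approximation
  have hint_each : ∀ k j, Integrable
      (fun u => (Ioc (grid k j) (grid k (j+1))).indicator (fun u => D (grid k j) * h u) u)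
      uniform01 := by
    intro k j
    exact ((hh.const_mul _).indicator measurableSet_Ioc)
  have hstep_int : ∀ k, ∫ u, stepD D k u * h u ∂uniform01 =
      ∑ j ∈ Finset.range (k+1), D (grid k j) * (H (grid k j) - H (grid k (j+1))) := by
    intro k
    have hptw : (fun u => stepD D k u * h u) = fun u =>
        ∑ j ∈ Finset.range (k+1),
          (Ioc (grid k j) (grid k (j+1))).indicator (fun u => D (grid k j) * h u) u := by
      funext u
      rw [stepD, Finset.sum_mul]
      refine Finset.sum_congr rfl (fun j _ => ?_)
      by_cases hu : u ∈ Ioc (grid k j) (grid k (j+1))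
      · rw [indicator_of_mem hu, indicator_of_mem hu]
      · rw [indicator_of_notMem hu, indicator_of_notMem hu, zero_mul]
    rw [hptw, integral_finset_sum _ (fun j _ => hint_each k j)]
    refine Finset.sum_congr rfl (fun j _ => ?_)
    rw [integral_indicator measurableSet_Ioc]
    have hchunk := tail_chunk hh (grid_mono k (Nat.le_succ j))
    calc ∫ u in Ioc (grid k j) (grid k (j+1)), D (grid k j) * h u ∂uniform01
        = D (grid k j) * ∫ u in Ioc (grid k j) (grid k (j+1)), h u ∂uniform01 := by
          rw [integral_const_mul]
      _ = D (grid k j) * (H (grid k j) - H (grid k (j+1))) := by rw [hchunk]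
  -- positivity of each step integral
  have hstep_pos : ∀ k, 0 ≤ ∫ u, stepD D k u * h u ∂uniform01 := by
    intro k
    rw [hstep_int k]
    have habel := abel_alg (fun j => D (grid k j)) (fun j => H (grid k j))
      (fun j => hD (grid_mono k (Nat.le_succ j)))
      (fun j => hH _ (grid_nonneg k j)) (k+1)
    have hH_zero : H (grid k 0) = 0 := by
      have : grid k 0 = 0 := by rw [grid]; simp
      rw [this, hHdef]
      simp only
      rw [uniform01_restrict_nonpos le_rfl]
      exact hH0
    have hH_one : H (grid k (k+1)) = 0 := by
      rw [grid_last, hHdef]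
      simp only
      rw [uniform01_restrict_one_le le_rfl]
      simp
    rw [hH_zero, hH_one] at habel
    simpa using habel
  -- dominated convergence
  have htend : Tendsto (fun k => ∫ u, stepD D k u * h u ∂uniform01) atTop
      (𝓝 (∫ u, D u * h u ∂uniform01)) := by
    apply tendsto_integral_of_dominated_convergence (fun u => L * |h u|)
    · intro k
      exact ((measurable_stepD D k).aestronglyMeasurable.mul hh.1)
    · exact (hh.abs.const_mul L)
    · intro k
      apply ae_of_all
      intro u
      rw [Real.norm_eq_abs, abs_mul]
      exact mul_le_mul_of_nonneg_right (stepD_abs_le hDb k u) (abs_nonneg _)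
    · -- a.e. pointwise convergence
      have hcount : volume {u : ℝ | ¬ContinuousAt D u} = 0 :=
        Set.Countable.measure_zero (hD.countable_not_continuousAt) _
      have hnull : uniform01 {u : ℝ | ¬ContinuousAt D u} = 0 := by
        rw [uniform01, Measure.restrict_apply' measurableSet_Ioo]
        exact measure_mono_null inter_subset_left hcount
      have hmem : ∀ᵐ u ∂uniform01, u ∈ Ioo (0:ℝ) 1 := by
        rw [uniform01]
        exact ae_restrict_mem measurableSet_Ioo
      have hcont : ∀ᵐ u ∂uniform01, ContinuousAt D u := by
        rw [ae_iff]
        exact hnull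
      filter_upwards [hmem, hcont] with u hu hc
      suffices hst : Tendsto (fun k => stepD D k u) atTop (𝓝 (D u)) from hst.mul_const _
      -- identify the cell containing u
      have hNpos : ∀ k : ℕ, (0:ℝ) < (k:ℝ) + 1 := fun k => by positivity
      set m : ℕ → ℕ := fun k => ⌈u * ((k:ℝ) + 1)⌉₊ with hm
      have hm1 : ∀ k, 1 ≤ m k := fun k => Nat.ceil_pos.2 (mul_pos hu.1 (hNpos k))
      have hmN : ∀ k, m k ≤ k + 1 := by
        intro k
        apply Nat.ceil_le.2
        push_cast
        nlinarith [hu.2, hNpos k]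
      have hcell : ∀ k, u ∈ Ioc (grid k (m k - 1)) (grid k (m k)) := by
        intro k
        constructor
        · rw [grid, div_lt_iff₀ (hNpos k)]
          have h1 : ((m k - 1 : ℕ) : ℝ) = (m k : ℝ) - 1 := by
            rw [Nat.cast_sub (hm1 k)]
            norm_num
          rw [h1]
          have h2 : (m k : ℝ) < u * ((k:ℝ)+1) + 1 :=
            Nat.ceil_lt_add_one (mul_pos hu.1 (hNpos k)).le
          linarith
        · rw [grid, le_div_iff₀ (hNpos k)]
          exact Nat.le_ceil _
      have hstep_eq : ∀ k, stepD D k u = D (grid k (m k - 1)) := by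
        intro k
        have hj : m k - 1 ∈ Finset.range (k+1) := by
          rw [Finset.mem_range]
          have := hmN k
          omega
        have hsucc : m k - 1 + 1 = m k := by
          have := hm1 k
          omega
        apply stepD_eq hj
        rw [hsucc]
        exact hcell k
      have hx_tend : Tendsto (fun k : ℕ => grid k (m k - 1)) atTop (𝓝 u) := by
        have hlow : ∀ k : ℕ, u - 1 / ((k:ℝ)+1) ≤ grid k (m k - 1) := by
          intro k
          rw [grid]
          rw [sub_le_iff_le_add, ← add_div, le_div_iff₀ (hNpos k)]
          have h1 : ((m k - 1 : ℕ) : ℝ) = (m k : ℝ) - 1 := by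
            rw [Nat.cast_sub (hm1 k)]
            norm_num
          rw [h1]
          have h2 : u * ((k:ℝ)+1) ≤ (m k : ℝ) := Nat.le_ceil _
          linarith
        have hhigh : ∀ k : ℕ, grid k (m k - 1) ≤ u := fun k => (hcell k).1.le
        have htend1 : Tendsto (fun k : ℕ => u - 1 / ((k:ℝ)+1)) atTop (𝓝 u) := by
          have := tendsto_one_div_add_atTop_nhds_zero_nat (𝕜 := ℝ)
          have h2 := (tendsto_const_nhds (x := u) (f := atTop (α := ℕ))).sub this
          simpa using h2
        exact tendsto_of_tendsto_of_tendsto_of_le_of_le htend1 tendsto_const_nhds hlow hhigh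
      have := hc.tendsto.comp hx_tend
      apply this.congr
      intro k
      exact (hstep_eq k).symm
  exact ge_of_tendsto' htend hstep_pos

/-- Core convex-order comparison for Lipschitz convex functions of two
nondecreasing rearrangements with equal means and dominated tails. -/
lemma core_lip {S T : ℝ → ℝ} (hS : MonotoneOn S (Ioo 0 1)) (hT : MonotoneOn T (Ioo 0 1))
    (hSi : Integrable S uniform01) (hTi : Integrable T uniform01)
    (heq : ∫ u, S u ∂uniform01 = ∫ u, T u ∂uniform01)
    (htail : ∀ p : ℝ, 0 < p → p < 1 →
      ∫ u, S u ∂(uniform01.restrict (Ioi p)) ≤ ∫ u, T u ∂(uniform01.restrict (Ioi p)))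
    {φ : ℝ → ℝ} (hφ : ConvexOn ℝ univ φ) {L : ℝ}
    (hL : ∀ a b : ℝ, |φ a - φ b| ≤ L * |a - b|) :
    ∫ u, φ (S u) ∂uniform01 ≤ ∫ u, φ (T u) ∂uniform01 := by
  have hL0 : 0 ≤ L := by
    have h1 := hL 0 1
    simp only [zero_sub, abs_neg, abs_one, mul_one] at h1
    exact le_trans (abs_nonneg _) h1
  have hφc : Continuous φ := by
    have : LipschitzWith (Real.toNNReal L) φ := by
      apply LipschitzWith.of_dist_le_mul
      intro x y
      rw [Real.dist_eq, Real.dist_eq, Real.coe_toNNReal L hL0]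
      exact hL x y
    exact this.continuous
  have hSm : AEMeasurable S uniform01 :=
    aemeasurable_restrict_of_monotoneOn measurableSet_Ioo hS
  have hTm : AEMeasurable T uniform01 :=
    aemeasurable_restrict_of_monotoneOn measurableSet_Ioo hT
  have hφS_int : Integrable (fun u => φ (S u)) uniform01 := by
    apply Integrable.mono' ((integrable_const (|φ 0|)).add (hSi.abs.const_mul L))
    · exact (hφc.measurable.comp_aemeasurable hSm).aestronglyMeasurable
    · apply ae_of_all
      intro u
      rw [Real.norm_eq_abs]
      calc |φ (S u)| ≤ |φ 0| + |φ (S u) - φ 0| := by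
            have := abs_sub_abs_le_abs_sub (φ (S u)) (φ 0)
            linarith [abs_sub_comm (φ (S u)) (φ 0)]
        _ ≤ |φ 0| + L * |S u - 0| := by linarith [hL (S u) 0]
        _ = |φ 0| + L * |S u| := by rw [sub_zero]
  have hφT_int : Integrable (fun u => φ (T u)) uniform01 := by
    apply Integrable.mono' ((integrable_const (|φ 0|)).add (hTi.abs.const_mul L))
    · exact (hφc.measurable.comp_aemeasurable hTm).aestronglyMeasurable
    · apply ae_of_all
      intro u
      rw [Real.norm_eq_abs]
      calc |φ (T u)| ≤ |φ 0| + |φ (T u) - φ 0| := by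
            have := abs_sub_abs_le_abs_sub (φ (T u)) (φ 0)
            linarith [abs_sub_comm (φ (T u)) (φ 0)]
        _ ≤ |φ 0| + L * |T u - 0| := by linarith [hL (T u) 0]
        _ = |φ 0| + L * |T u| := by rw [sub_zero]
  -- the extended subgradient along S
  set DD : ℝ → ℝ := fun u => if u < 1 then (if 0 < u then lsub φ (S u) else -L) else L
    with hDD
  have hDDb : ∀ u, |DD u| ≤ L := by
    intro u
    simp only [hDD]
    by_cases h1 : u < 1
    · rw [if_pos h1]
      by_cases h2 : 0 < u
      · rw [if_pos h2]
        exact abs_lsub_le hφ hL (S u)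
      · rw [if_neg h2, abs_neg, abs_of_nonneg hL0]
    · rw [if_neg h1, abs_of_nonneg hL0]
  have hbnd : ∀ x : ℝ, -L ≤ lsub φ (S x) ∧ lsub φ (S x) ≤ L :=
    fun x => abs_le.1 (abs_lsub_le hφ hL (S x))
  have hDDmono : Monotone DD := by
    intro a b hab
    simp only [hDD]
    by_cases hb1 : b < 1
    · have ha1 : a < 1 := lt_of_le_of_lt hab hb1
      rw [if_pos ha1, if_pos hb1]
      by_cases hb2 : 0 < b
      · rw [if_pos hb2]
        by_cases ha2 : 0 < a
        · rw [if_pos ha2]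
          exact lsub_monotone hφ (hS ⟨ha2, ha1⟩ ⟨hb2, hb1⟩ hab)
        · rw [if_neg ha2]
          exact (hbnd b).1
      · have ha2 : ¬ 0 < a := fun h => hb2 (lt_of_lt_of_le h hab)
        rw [if_neg ha2, if_neg hb2]
    · rw [if_neg hb1]
      by_cases ha1 : a < 1
      · rw [if_pos ha1]
        by_cases ha2 : 0 < a
        · rw [if_pos ha2]
          exact (hbnd a).2
        · rw [if_neg ha2]
          linarith
      · rw [if_neg ha1]
  set h : ℝ → ℝ := fun u => T u - S u with hh
  have hh_int : Integrable h uniform01 := hTi.sub hSi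
  have hH : ∀ p : ℝ, 0 ≤ p → 0 ≤ ∫ u, h u ∂(uniform01.restrict (Ioi p)) := by
    intro p hp0
    rcases lt_or_ge p 1 with hp1 | hp1
    · rcases eq_or_lt_of_le hp0 with rfl | hp0'
      · rw [uniform01_restrict_nonpos le_rfl]
        rw [hh]
        rw [integral_sub hTi hSi]
        linarith [heq]
      · have h1 := htail p hp0' hp1
        rw [hh]
        rw [integral_sub (hTi.restrict) (hSi.restrict)]
        linarith
    · rw [uniform01_restrict_one_le hp1]
      simp
  have hH0 : ∫ u, h u ∂uniform01 = 0 := by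
    rw [hh, integral_sub hTi hSi]
    linarith [heq]
  have habel := abel_step hDDmono hDDb hh_int hH hH0
  -- pointwise subgradient inequality a.e.
  have hptw : ∀ᵐ u ∂uniform01, DD u * h u ≤ φ (T u) - φ (S u) := by
    have hmem : ∀ᵐ u ∂uniform01, u ∈ Ioo (0:ℝ) 1 := by
      rw [uniform01]
      exact ae_restrict_mem measurableSet_Ioo
    filter_upwards [hmem] with u hu
    have hDDu : DD u = lsub φ (S u) := by
      simp only [hDD]
      rw [if_pos hu.2, if_pos hu.1]
    rw [hDDu, hh]
    show lsub φ (S u) * (T u - S u) ≤ φ (T u) - φ (S u)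
    have := lsub_support hφ (S u) (T u)
    linarith
  have hDh_int : Integrable (fun u => DD u * h u) uniform01 := by
    apply Integrable.mono' (hh_int.abs.const_mul L)
    · exact (hDDmono.measurable.aestronglyMeasurable.mul hh_int.1)
    · apply ae_of_all
      intro u
      rw [Real.norm_eq_abs, abs_mul]
      exact mul_le_mul_of_nonneg_right (hDDb u) (abs_nonneg _)
  have hmono_int : ∫ u, DD u * h u ∂uniform01 ≤ ∫ u, (φ (T u) - φ (S u)) ∂uniform01 :=
    integral_mono_ae hDh_int (hφT_int.sub hφS_int) hptw
  rw [integral_sub hφT_int hφS_int] at hmono_int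
  linarith


lemma uniform01_Ioi {p : ℝ} (hp0 : 0 ≤ p) :
    uniform01 (Ioi p) = ENNReal.ofReal (1 - p) := by
  rw [uniform01, Measure.restrict_apply' measurableSet_Ioo]
  have : Ioi p ∩ Ioo 0 1 = Ioo p 1 := by
    ext u
    simp only [mem_inter_iff, mem_Ioi, mem_Ioo]
    constructor
    · rintro ⟨h1, h2, h3⟩
      exact ⟨h1, h3⟩
    · rintro ⟨h1, h2⟩
      exact ⟨h1, lt_of_le_of_lt hp0 h1, h2⟩
  rw [this, Real.volume_Ioo]

lemma integrable_call {K : Measure ℝ} [IsProbabilityMeasure K] (hKi : Integrable id K)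
    (x : ℝ) : Integrable (fun t => max (t - x) 0) K := by
  apply Integrable.mono' (hKi.abs.add (integrable_const |x|))
  · exact ((continuous_id.sub continuous_const).max continuous_const).aestronglyMeasurable
  · apply ae_of_all
    intro t
    rw [Real.norm_eq_abs, abs_of_nonneg (le_max_right _ _)]
    have h1 : t - x ≤ |t| + |x| := by
      calc t - x ≤ |t - x| := le_abs_self _
        _ ≤ |t| + |x| := abs_sub _ _
    have h2 : (0:ℝ) ≤ |t| + |x| := by positivity
    exact max_le h1 h2

lemma integrable_max_quantile {K : Measure ℝ} [IsProbabilityMeasure K]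
    (hKi : Integrable id K) (x : ℝ) :
    Integrable (fun u => max (quantile K u - x) 0) uniform01 :=
  integrable_comp_quantile (f := fun t => max (t - x) 0)
    ((continuous_id.sub continuous_const).max continuous_const) (integrable_call hKi x)

lemma integral_max_quantile {K : Measure ℝ} [IsProbabilityMeasure K] (x : ℝ) :
    ∫ u, max (quantile K u - x) 0 ∂uniform01 = ∫ t, max (t - x) 0 ∂K :=
  integral_quantile_comp (f := fun t => max (t - x) 0)
    ((continuous_id.sub continuous_const).max continuous_const)

/-- Rockafellar–Uryasev exact representation at the quantile point. -/
lemma tail_quantile_eq {K : Measure ℝ} [IsProbabilityMeasure K] (hKi : Integrable id K)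
    {p : ℝ} (hp : 0 < p) (hp1 : p < 1) :
    ∫ u, quantile K u ∂(uniform01.restrict (Ioi p)) =
      (1 - p) * quantile K p + ∫ u, max (quantile K u - quantile K p) 0 ∂uniform01 := by
  set q := quantile K with hq
  set x := quantile K p with hx
  have hqi : Integrable q uniform01 := integrable_quantile hKi
  have hmax : Integrable (fun u => max (q u - x) 0) uniform01 :=
    integrable_max_quantile hKi x
  have hsplit : ∫ u, max (q u - x) 0 ∂uniform01 =
      (∫ u, max (q u - x) 0 ∂(uniform01.restrict (Iic p))) +
        ∫ u, max (q u - x) 0 ∂(uniform01.restrict (Ioi p)) := by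
    have hdecomp : uniform01.restrict (Iic p) + uniform01.restrict (Ioi p) = uniform01 := by
      have := Measure.restrict_add_restrict_compl (μ := uniform01) (s := Iic p)
        measurableSet_Iic
      rwa [compl_Iic] at this
    have hadd := integral_add_measure (μ := uniform01.restrict (Iic p))
      (ν := uniform01.restrict (Ioi p)) (f := fun u => max (q u - x) 0)
      hmax.restrict hmax.restrict
    rw [hdecomp] at hadd
    exact hadd
  have hleft : ∫ u, max (q u - x) 0 ∂(uniform01.restrict (Iic p)) = 0 := by
    have hres : uniform01.restrict (Iic p) = volume.restrict (Iic p ∩ Ioo 0 1) := by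
      rw [uniform01, Measure.restrict_restrict measurableSet_Iic]
    rw [hres]
    apply integral_eq_zero_of_ae
    filter_upwards [ae_restrict_mem (measurableSet_Iic.inter measurableSet_Ioo)] with u hu
    have hqle : q u ≤ x := by
      rw [hq, hx]
      exact monotoneOn_quantile hu.2 ⟨hp, hp1⟩ hu.1
    simp only [Pi.zero_apply]
    rw [max_eq_right (by linarith)]
  have hright : ∫ u, max (q u - x) 0 ∂(uniform01.restrict (Ioi p)) =
      (∫ u, q u ∂(uniform01.restrict (Ioi p))) - (1 - p) * x := by
    have hres : uniform01.restrict (Ioi p) = volume.restrict (Ioi p ∩ Ioo 0 1) := by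
      rw [uniform01, Measure.restrict_restrict measurableSet_Ioi]
    have hae : ∀ᵐ u ∂(uniform01.restrict (Ioi p)), max (q u - x) 0 = q u - x := by
      rw [hres]
      filter_upwards [ae_restrict_mem (measurableSet_Ioi.inter measurableSet_Ioo)] with u hu
      have hxle : x ≤ q u := by
        rw [hq, hx]
        exact monotoneOn_quantile ⟨hp, hp1⟩ hu.2 hu.1.le
      rw [max_eq_left (by linarith)]
    rw [integral_congr_ae hae, integral_sub hqi.restrict (integrable_const x)]
    have hconst : ∫ _, x ∂(uniform01.restrict (Ioi p)) = (1 - p) * x := by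
      rw [integral_const]
      rw [measureReal_def, Measure.restrict_apply_univ, uniform01_Ioi hp.le,
        ENNReal.toReal_ofReal (by linarith), smul_eq_mul]
    rw [hconst]
  rw [hleft, hright] at hsplit
  linarith [hsplit]

/-- Rockafellar–Uryasev inequality at an arbitrary point. -/
lemma tail_quantile_le {K : Measure ℝ} [IsProbabilityMeasure K] (hKi : Integrable id K)
    {p : ℝ} (hp : 0 < p) (hp1 : p < 1) (x : ℝ) :
    ∫ u, quantile K u ∂(uniform01.restrict (Ioi p)) ≤
      (1 - p) * x + ∫ u, max (quantile K u - x) 0 ∂uniform01 := by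
  set q := quantile K with hq
  have hqi : Integrable q uniform01 := integrable_quantile hKi
  have hmax : Integrable (fun u => max (q u - x) 0) uniform01 :=
    integrable_max_quantile hKi x
  have hxadd : Integrable (fun u => x + max (q u - x) 0) (uniform01.restrict (Ioi p)) :=
    (integrable_const x).add hmax.restrict
  have h1 : ∫ u, q u ∂(uniform01.restrict (Ioi p)) ≤
      ∫ u, (x + max (q u - x) 0) ∂(uniform01.restrict (Ioi p)) := by
    apply integral_mono hqi.restrict hxadd
    intro u
    have := le_max_left (q u - x) 0
    simp only
    linarith
  have h2 : ∫ u, (x + max (q u - x) 0) ∂(uniform01.restrict (Ioi p)) =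
      (1 - p) * x + ∫ u, max (q u - x) 0 ∂(uniform01.restrict (Ioi p)) := by
    rw [integral_add (integrable_const x) hmax.restrict, integral_const,
      measureReal_def, Measure.restrict_apply_univ, uniform01_Ioi hp.le,
      ENNReal.toReal_ofReal (by linarith), smul_eq_mul]
  have h3 : ∫ u, max (q u - x) 0 ∂(uniform01.restrict (Ioi p)) ≤
      ∫ u, max (q u - x) 0 ∂uniform01 := by
    apply integral_mono_measure Measure.restrict_le_self ?_ hmax
    apply ae_of_all
    intro u
    exact le_max_right _ _
  linarith

/-- ES-superadditivity of the distribution mixture. -/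
lemma tail_mix {n : ℕ} {Λ : Matrix (Fin n) (Fin n) ℝ} {F : Fin n → Measure ℝ}
    (hΛ : DoublyStochastic Λ) (hF : ∀ j, IsProbabilityMeasure (F j))
    (hFint : ∀ j, Integrable id (F j)) (i : Fin n) {p : ℝ} (hp : 0 < p) (hp1 : p < 1) :
    ∑ j, Λ i j * ∫ u, quantile (F j) u ∂(uniform01.restrict (Ioi p)) ≤
      ∫ u, quantile (distMix Λ F i) u ∂(uniform01.restrict (Ioi p)) := by
  haveI hGP : IsProbabilityMeasure (distMix Λ F i) := distMix_isProb hΛ hF i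
  have hGint : Integrable id (distMix Λ F i) := integrable_distMix hFint i
  set x := quantile (distMix Λ F i) p with hxd
  have hstep1 : ∀ j, ∫ u, quantile (F j) u ∂(uniform01.restrict (Ioi p)) ≤
      (1 - p) * x + ∫ t, max (t - x) 0 ∂(F j) := by
    intro j
    haveI := hF j
    have := tail_quantile_le (hFint j) hp hp1 x
    rwa [integral_max_quantile] at this
  calc ∑ j, Λ i j * ∫ u, quantile (F j) u ∂(uniform01.restrict (Ioi p))
      ≤ ∑ j, Λ i j * ((1 - p) * x + ∫ t, max (t - x) 0 ∂(F j)) := by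
        apply Finset.sum_le_sum
        intro j _
        exact mul_le_mul_of_nonneg_left (hstep1 j) (hΛ.1 i j)
    _ = (1 - p) * x + ∑ j, Λ i j * ∫ t, max (t - x) 0 ∂(F j) := by
        rw [Finset.sum_congr rfl
          (fun j _ => mul_add (Λ i j) ((1 - p) * x) (∫ t, max (t - x) 0 ∂(F j))),
          Finset.sum_add_distrib, ← Finset.sum_mul, hΛ.2.1 i, one_mul]
    _ = (1 - p) * x + ∫ t, max (t - x) 0 ∂(distMix Λ F i) := by
        rw [integral_distMix hΛ.1 (fun j => by haveI := hF j; exact integrable_call (hFint j) x) i]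
    _ = (1 - p) * x + ∫ u, max (quantile (distMix Λ F i) u - x) 0 ∂uniform01 := by
        rw [integral_max_quantile]
    _ = ∫ u, quantile (distMix Λ F i) u ∂(uniform01.restrict (Ioi p)) := by
        rw [hxd]
        exact (tail_quantile_eq hGint hp hp1).symm

lemma integrable_lipschitz_comp {ν : Measure ℝ} [IsFiniteMeasure ν] {g : ℝ → ℝ}
    (hg : Integrable g ν) (hgm : AEMeasurable g ν) {f : ℝ → ℝ} (hf : Continuous f)
    {L : ℝ} (hL : ∀ a b : ℝ, |f a - f b| ≤ L * |a - b|) :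
    Integrable (fun u => f (g u)) ν := by
  have hL0 : 0 ≤ L := by
    have h1 := hL 0 1
    simp only [zero_sub, abs_neg, abs_one, mul_one] at h1
    exact le_trans (abs_nonneg _) h1
  apply Integrable.mono' ((integrable_const (|f 0|)).add (hg.abs.const_mul L))
  · exact (hf.measurable.comp_aemeasurable hgm).aestronglyMeasurable
  · apply ae_of_all
    intro u
    rw [Real.norm_eq_abs]
    calc |f (g u)| ≤ |f 0| + |f (g u) - f 0| := by
          have := abs_sub_abs_le_abs_sub (f (g u)) (f 0)
          linarith [abs_sub_comm (f (g u)) (f 0)]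
      _ ≤ |f 0| + L * |g u - 0| := by linarith [hL (g u) 0]
      _ = |f 0| + L * |g u| := by rw [sub_zero]

end Stmt3Aux

open Stmt3Aux in
/-- Theorem 2.2: C(𝐅) ⊆ C(Λ𝐅). -/
theorem stmt3 (n : ℕ)
    (F : Fin n → Measure ℝ) (hF : ∀ i, IsProbabilityMeasure (F i))
    (hFint : ∀ i, Integrable id (F i))
    (Λ : Matrix (Fin n) (Fin n) ℝ) (hΛ : DoublyStochastic Λ)
    (G : Measure ℝ) (hG : IsProbabilityMeasure G) (hGint : Integrable id G)
    (hcx : ConvexOrder G (comonoSum n F)) :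
    ConvexOrder G (comonoSum n (distMix Λ F)) := by
  classical
  intro φ hφ hφG hφT
  -- setup
  haveI hGP : ∀ i, IsProbabilityMeasure (distMix Λ F i) := distMix_isProb hΛ hF
  have hGiInt : ∀ i, Integrable id (distMix Λ F i) := fun i => integrable_distMix hFint i
  set S : ℝ → ℝ := fun u => ∑ i, quantile (F i) u with hSdef
  set T : ℝ → ℝ := fun u => ∑ i, quantile (distMix Λ F i) u with hTdef
  have hcomS : comonoSum n F = uniform01.map S := rfl
  have hcomT : comonoSum n (distMix Λ F) = uniform01.map T := rfl
  have hSmono : MonotoneOn S (Set.Ioo 0 1) := by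
    intro a ha b hb hab
    apply Finset.sum_le_sum
    intro i _
    haveI := hF i
    exact monotoneOn_quantile ha hb hab
  have hTmono : MonotoneOn T (Set.Ioo 0 1) := by
    intro a ha b hb hab
    apply Finset.sum_le_sum
    intro i _
    haveI := hGP i
    exact monotoneOn_quantile ha hb hab
  have hSint : Integrable S uniform01 := by
    apply integrable_finset_sum
    intro i _
    haveI := hF i
    exact integrable_quantile (hFint i)
  have hTint : Integrable T uniform01 := by
    apply integrable_finset_sum
    intro i _
    haveI := hGP i
    exact integrable_quantile (hGiInt i)
  have hSm : AEMeasurable S uniform01 := by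
    apply Finset.aemeasurable_fun_sum
    intro i _
    haveI := hF i
    exact aemeasurable_quantile
  have hTm : AEMeasurable T uniform01 := by
    apply Finset.aemeasurable_fun_sum
    intro i _
    haveI := hGP i
    exact aemeasurable_quantile
  -- equal means
  have hmeanS : ∫ u, S u ∂uniform01 = ∑ i, ∫ x, (fun y => y) x ∂(F i) := by
    rw [hSdef]
    rw [integral_finset_sum _ (fun i _ => by haveI := hF i; exact integrable_quantile (hFint i))]
    refine Finset.sum_congr rfl (fun i _ => ?_)
    haveI := hF i
    exact integral_quantile_comp (f := fun y => y) continuous_id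
  have hmeanT : ∫ u, T u ∂uniform01 = ∑ i, ∫ x, (fun y => y) x ∂(distMix Λ F i) := by
    rw [hTdef]
    rw [integral_finset_sum _ (fun i _ => by haveI := hGP i; exact integrable_quantile (hGiInt i))]
    refine Finset.sum_congr rfl (fun i _ => ?_)
    haveI := hGP i
    exact integral_quantile_comp (f := fun y => y) continuous_id
  have heq : ∫ u, S u ∂uniform01 = ∫ u, T u ∂uniform01 := by
    rw [hmeanS, hmeanT]
    have hTm2 : ∀ i, ∫ x, (fun y => y) x ∂(distMix Λ F i) =
        ∑ j, Λ i j * ∫ x, (fun y => y) x ∂(F j) :=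
      fun i => integral_distMix hΛ.1 (fun j => hFint j) i
    rw [Finset.sum_congr rfl (fun i _ => hTm2 i), Finset.sum_comm]
    refine Finset.sum_congr rfl (fun j _ => ?_)
    rw [← Finset.sum_mul, hΛ.2.2 j, one_mul]
  -- tail dominance
  have htail : ∀ p : ℝ, 0 < p → p < 1 →
      ∫ u, S u ∂(uniform01.restrict (Set.Ioi p)) ≤
        ∫ u, T u ∂(uniform01.restrict (Set.Ioi p)) := by
    intro p hp0 hp1
    have hStail : ∫ u, S u ∂(uniform01.restrict (Set.Ioi p)) =
        ∑ i, ∫ u, quantile (F i) u ∂(uniform01.restrict (Set.Ioi p)) := by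
      rw [hSdef]
      exact integral_finset_sum _ (fun i _ => by
        haveI := hF i
        exact (integrable_quantile (hFint i)).restrict)
    have hTtail : ∫ u, T u ∂(uniform01.restrict (Set.Ioi p)) =
        ∑ i, ∫ u, quantile (distMix Λ F i) u ∂(uniform01.restrict (Set.Ioi p)) := by
      rw [hTdef]
      exact integral_finset_sum _ (fun i _ => by
        haveI := hGP i
        exact (integrable_quantile (hGiInt i)).restrict)
    rw [hStail, hTtail]
    have hper : ∀ i : Fin n,
        ∑ j, Λ i j * ∫ u, quantile (F j) u ∂(uniform01.restrict (Set.Ioi p)) ≤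
          ∫ u, quantile (distMix Λ F i) u ∂(uniform01.restrict (Set.Ioi p)) :=
      fun i => tail_mix hΛ hF hFint i hp0 hp1
    calc ∑ i, ∫ u, quantile (F i) u ∂(uniform01.restrict (Set.Ioi p))
        = ∑ j, (∑ i, Λ i j) * ∫ u, quantile (F j) u ∂(uniform01.restrict (Set.Ioi p)) := by
          refine Finset.sum_congr rfl (fun j _ => ?_)
          rw [hΛ.2.2 j, one_mul]
      _ = ∑ i, ∑ j, Λ i j * ∫ u, quantile (F j) u ∂(uniform01.restrict (Set.Ioi p)) := by
          rw [Finset.sum_comm]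
          exact Finset.sum_congr rfl (fun j _ => by rw [Finset.sum_mul])
      _ ≤ ∑ i, ∫ u, quantile (distMix Λ F i) u ∂(uniform01.restrict (Set.Ioi p)) :=
          Finset.sum_le_sum (fun i _ => hper i)
  -- continuity of φ
  have hφc : Continuous φ := by
    have := ConvexOn.continuousOn isOpen_univ hφ
    rwa [continuousOn_univ] at this
  have hφT' : Integrable φ (uniform01.map T) := by
    rw [← hcomT]
    exact hφT
  have hφTcomp : Integrable (fun u => φ (T u)) uniform01 :=
    (integrable_map_measure (μ := uniform01) (f := T) (g := φ)
      hφc.aestronglyMeasurable hTm).1 hφT'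
  have hintφT : ∫ x, φ x ∂(comonoSum n (distMix Λ F)) = ∫ u, φ (T u) ∂uniform01 := by
    rw [hcomT]
    exact integral_map hTm hφc.aestronglyMeasurable
  -- per-k chain of inequalities for the tangent approximations
  set σ : ℕ → ℝ → ℝ := fun k => tangentMax φ k with hσ
  have hσGall : ∀ k, Integrable (σ k) G := by
    intro k
    obtain ⟨L, hL0, hLk⟩ := tangentMax_lipschitz (φ := φ) k
    have := integrable_lipschitz_comp (ν := G) (g := fun x => x)
      (by exact hGint) aemeasurable_id (continuous_tangentMax k) hLk
    simpa using this
  have hkey : ∀ k, ∫ x, σ k x ∂G ≤ ∫ x, φ x ∂(comonoSum n (distMix Λ F)) := by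
    intro k
    obtain ⟨L, hL0, hLk⟩ := tangentMax_lipschitz (φ := φ) k
    have hσconv := convexOn_tangentMax (φ := φ) k
    have hσcont := continuous_tangentMax (φ := φ) k
    have hσScomp : Integrable (fun u => σ k (S u)) uniform01 :=
      integrable_lipschitz_comp hSint hSm hσcont hLk
    have hσS : Integrable (σ k) (uniform01.map S) :=
      (integrable_map_measure hσcont.aestronglyMeasurable hSm).2 hσScomp
    have hA : ∫ x, σ k x ∂G ≤ ∫ x, σ k x ∂(uniform01.map S) := by
      have := hcx (σ k) hσconv (hσGall k) (by rw [hcomS]; exact hσS)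
      rwa [hcomS] at this
    have hmapS : ∫ x, σ k x ∂(uniform01.map S) = ∫ u, σ k (S u) ∂uniform01 :=
      integral_map hSm hσcont.aestronglyMeasurable
    have hB : ∫ u, σ k (S u) ∂uniform01 ≤ ∫ u, σ k (T u) ∂uniform01 :=
      core_lip hSmono hTmono hSint hTint heq htail hσconv hLk
    have hσTcomp : Integrable (fun u => σ k (T u)) uniform01 :=
      integrable_lipschitz_comp hTint hTm hσcont hLk
    have hC : ∫ u, σ k (T u) ∂uniform01 ≤ ∫ u, φ (T u) ∂uniform01 := by
      apply integral_mono hσTcomp hφTcomp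
      intro u
      exact tangentMax_le hφ k (T u)
    rw [hintφT]
    calc ∫ x, σ k x ∂G ≤ ∫ x, σ k x ∂(uniform01.map S) := hA
      _ = ∫ u, σ k (S u) ∂uniform01 := hmapS
      _ ≤ ∫ u, σ k (T u) ∂uniform01 := hB
      _ ≤ ∫ u, φ (T u) ∂uniform01 := hC
  -- monotone convergence over G
  have htendG : Filter.Tendsto (fun k => ∫ x, σ k x ∂G) Filter.atTop
      (nhds (∫ x, φ x ∂G)) := by
    apply integral_tendsto_of_tendsto_of_monotone hσGall hφG
    · exact MeasureTheory.ae_of_all _ (fun x =>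
        monotone_nat_of_le_succ (fun k => tangentMax_mono k x))
    · exact MeasureTheory.ae_of_all _ (fun x => tangentMax_tendsto hφ x)
  exact le_of_tendsto' htendG hkey

end
end

section
/- Let 𝐅 = (F₁,…,Fₙ) be an n-tuple of Borel probability measures on ℝ, each with finite first moment, and let Λ be an n×n doubly stochastic matrix. Then C(𝐅) = C(Λ⊗𝐅), where Λ⊗𝐅 is the Λ-quantile mixture of 𝐅. -/
open MeasureTheory
open scoped ENNReal BigOperators

noncomputable section

section auxlemmas

open ProbabilityTheory Set Filter Topology

/-- rewrite quantile via Mathlib's cdf. -/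
lemma quantile_eq_cdf (F : Measure ℝ) [IsProbabilityMeasure F] (p : ℝ) :
    quantile F p = sInf {x : ℝ | p ≤ cdf F x} := by
  unfold quantile
  congr 1
  ext x
  simp only [Set.mem_setOf_eq, cdf_eq_real, measureReal_def]

lemma cdfset_nonempty (F : Measure ℝ) [IsProbabilityMeasure F] {p : ℝ} (hp1 : p < 1) :
    {x : ℝ | p ≤ cdf F x}.Nonempty := by
  have h := (tendsto_cdf_atTop (μ := F)).eventually (eventually_gt_nhds hp1)
  obtain ⟨x, hx⟩ := h.exists
  exact ⟨x, hx.le⟩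

lemma cdfset_bddBelow (F : Measure ℝ) [IsProbabilityMeasure F] {p : ℝ} (hp0 : 0 < p) :
    BddBelow {x : ℝ | p ≤ cdf F x} := by
  have h := (tendsto_cdf_atBot (μ := F)).eventually (eventually_lt_nhds hp0)
  obtain ⟨y, hy⟩ := h.exists
  refine ⟨y, fun x hx => ?_⟩
  by_contra hxy
  push_neg at hxy
  exact absurd (le_trans hx (monotone_cdf F hxy.le)) (not_le.2 hy)

lemma le_cdf_quantile (F : Measure ℝ) [IsProbabilityMeasure F] {p : ℝ}
    (hp0 : 0 < p) (hp1 : p < 1) : p ≤ cdf F (quantile F p) := by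
  rw [quantile_eq_cdf]
  set q := sInf {x : ℝ | p ≤ cdf F x} with hq
  have h1 : ∀ x, q < x → p ≤ cdf F x := by
    intro x hx
    obtain ⟨s, hs, hsx⟩ := exists_lt_of_csInf_lt (cdfset_nonempty F hp1) hx
    exact hs.trans (monotone_cdf F hsx.le)
  have h2 : Tendsto (cdf F) (𝓝[>] q) (𝓝 (cdf F q)) :=
    ((cdf F).right_continuous q).mono_left (nhdsWithin_mono q Ioi_subset_Ici_self)
  exact ge_of_tendsto h2 (eventually_nhdsWithin_of_forall fun x hx => h1 x hx)

lemma quantile_le_iff (F : Measure ℝ) [IsProbabilityMeasure F] {p x : ℝ}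
    (hp0 : 0 < p) (hp1 : p < 1) : quantile F p ≤ x ↔ p ≤ cdf F x := by
  constructor
  · intro h
    exact (le_cdf_quantile F hp0 hp1).trans (monotone_cdf F h)
  · intro h
    rw [quantile_eq_cdf]
    exact csInf_le (cdfset_bddBelow F hp0) h

lemma quantile_monotoneOn (F : Measure ℝ) [IsProbabilityMeasure F] :
    MonotoneOn (quantile F) (Set.Ioo 0 1) := by
  intro p hp p' hp' hle
  rw [quantile_le_iff F hp.1 hp.2]
  exact hle.trans (le_cdf_quantile F hp'.1 hp'.2)

/-- Left quasi-continuity of the quantile function. -/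
lemma quantile_left_quasi (F : Measure ℝ) [IsProbabilityMeasure F] {p : ℝ}
    (hp0 : 0 < p) (hp1 : p < 1) {ε : ℝ} (hε : 0 < ε) :
    ∃ p' ∈ Set.Ioo 0 p, quantile F p - ε < quantile F p' := by
  by_contra hcon
  push_neg at hcon
  have key : ∀ p' ∈ Set.Ioo (0:ℝ) p, p' ≤ cdf F (quantile F p - ε) := by
    intro p' hp'
    exact (quantile_le_iff F hp'.1 (hp'.2.trans hp1)).1 (hcon p' hp')
  have hple : p ≤ cdf F (quantile F p - ε) := by
    by_contra h
    push_neg at h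
    obtain ⟨p', hp'1, hp'2⟩ := exists_between h
    have h0 : 0 < p' := lt_of_le_of_lt (cdf_nonneg F _) hp'1
    exact absurd (key p' ⟨h0, hp'2⟩) (not_le.2 hp'1)
  have := (quantile_le_iff F hp0 hp1).2 hple
  linarith

/-- A function monotone on (0,1) is a.e. measurable w.r.t. uniform01. -/
lemma aemeasurable_uniform01_of_monotoneOn (g : ℝ → ℝ)
    (hm : MonotoneOn g (Set.Ioo 0 1)) : AEMeasurable g uniform01 := by
  have hpre : ∀ x : ℝ, MeasurableSet (Set.Ioo (0:ℝ) 1 ∩ g ⁻¹' Set.Iic x) := by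
    intro x
    refine Set.OrdConnected.measurableSet ⟨fun a ha b hb c hc => ?_⟩
    have hc1 : c ∈ Set.Ioo (0:ℝ) 1 :=
      ⟨lt_of_lt_of_le ha.1.1 hc.1, lt_of_le_of_lt hc.2 hb.1.2⟩
    exact ⟨hc1, le_trans (hm hc1 hb.1 hc.2) hb.2⟩
  have hmeas : Measurable ((Set.Ioo (0:ℝ) 1).indicator g) := by
    apply measurable_of_Iic
    intro x
    by_cases h0 : (0:ℝ) ≤ x
    · have : (Set.Ioo (0:ℝ) 1).indicator g ⁻¹' Set.Iic x
          = (Set.Ioo (0:ℝ) 1 ∩ g ⁻¹' Set.Iic x) ∪ (Set.Ioo (0:ℝ) 1)ᶜ := by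
        ext u
        by_cases hu : u ∈ Set.Ioo (0:ℝ) 1 <;>
          simp [Set.indicator_apply, hu, h0]
      rw [this]
      exact (hpre x).union measurableSet_Ioo.compl
    · have : (Set.Ioo (0:ℝ) 1).indicator g ⁻¹' Set.Iic x
          = Set.Ioo (0:ℝ) 1 ∩ g ⁻¹' Set.Iic x := by
        ext u
        by_cases hu : u ∈ Set.Ioo (0:ℝ) 1 <;>
          simp [Set.indicator_apply, hu, h0]
      rw [this]
      exact hpre x
  refine hmeas.aemeasurable.congr ?_
  unfold uniform01
  refine (MeasureTheory.ae_restrict_iff' measurableSet_Ioo).2 ?_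
  exact Filter.Eventually.of_forall fun u hu => Set.indicator_of_mem hu g

/-- Key lemma: quantile of the image of uniform01 under a monotone,
left quasi-continuous function recovers the function on (0,1). -/
lemma quantile_map_uniform01 (g : ℝ → ℝ) (hm : MonotoneOn g (Set.Ioo 0 1))
    (hq : ∀ u ∈ Set.Ioo (0:ℝ) 1, ∀ ε > (0:ℝ), ∃ p' ∈ Set.Ioo 0 u, g u - ε < g p')
    {u : ℝ} (hu : u ∈ Set.Ioo (0:ℝ) 1) :
    quantile (uniform01.map g) u = g u := by
  have hmeas := aemeasurable_uniform01_of_monotoneOn g hm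
  have happ : ∀ x : ℝ, (uniform01.map g) (Set.Iic x)
      = volume (g ⁻¹' Set.Iic x ∩ Set.Ioo 0 1) := by
    intro x
    rw [Measure.map_apply_of_aemeasurable hmeas measurableSet_Iic]
    unfold uniform01
    rw [Measure.restrict_apply' measurableSet_Ioo]
  set S := {x : ℝ | u ≤ ((uniform01.map g) (Set.Iic x)).toReal} with hS
  have hfin : ∀ x : ℝ, (uniform01.map g) (Set.Iic x) ≠ ⊤ := by
    intro x
    rw [happ]
    exact ne_top_of_le_ne_top (by simp) (measure_mono Set.inter_subset_right)
  have hmem : g u ∈ S := by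
    have hsub : Set.Ioo 0 u ⊆ g ⁻¹' Set.Iic (g u) ∩ Set.Ioo 0 1 := by
      intro t ht
      have ht1 : t ∈ Set.Ioo (0:ℝ) 1 := ⟨ht.1, ht.2.trans hu.2⟩
      exact ⟨hm ht1 hu ht.2.le, ht1⟩
    have h1 : ENNReal.ofReal u ≤ (uniform01.map g) (Set.Iic (g u)) := by
      rw [happ]
      calc ENNReal.ofReal u = volume (Set.Ioo (0:ℝ) u) := by
            rw [Real.volume_Ioo, sub_zero]
        _ ≤ _ := measure_mono hsub
    have := ENNReal.toReal_mono (hfin (g u)) h1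
    rwa [ENNReal.toReal_ofReal hu.1.le] at this
  have hlb : ∀ x ∈ S, g u ≤ x := by
    intro x hx
    have hx' : u ≤ ((uniform01.map g) (Set.Iic x)).toReal := hx
    refine le_of_forall_pos_le_add fun ε hε => ?_
    obtain ⟨p', hp', hgp'⟩ := hq u hu ε hε
    have hex : ∃ t ∈ g ⁻¹' Set.Iic x ∩ Set.Ioo 0 1, p' ≤ t := by
      by_contra hcon
      push_neg at hcon
      have hsub : g ⁻¹' Set.Iic x ∩ Set.Ioo 0 1 ⊆ Set.Ioo 0 p' := by
        intro t ht
        exact ⟨ht.2.1, hcon t ht⟩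
      have h1 : (uniform01.map g) (Set.Iic x) ≤ ENNReal.ofReal p' := by
        rw [happ]
        calc volume (g ⁻¹' Set.Iic x ∩ Set.Ioo 0 1) ≤ volume (Set.Ioo (0:ℝ) p') :=
              measure_mono hsub
          _ = ENNReal.ofReal p' := by rw [Real.volume_Ioo, sub_zero]
      have h2 := ENNReal.toReal_mono (by simp) h1
      rw [ENNReal.toReal_ofReal hp'.1.le] at h2
      linarith [hp'.2, hx'.trans h2]
    obtain ⟨t, ht, hpt⟩ := hex
    have hp1 : p' ∈ Set.Ioo (0:ℝ) 1 := ⟨hp'.1, hp'.2.trans hu.2⟩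
    have : g p' ≤ g t := hm hp1 ht.2 hpt
    have hgt : g t ≤ x := ht.1
    linarith
  unfold quantile
  exact le_antisymm (csInf_le ⟨g u, hlb⟩ hmem) (le_csInf ⟨g u, hmem⟩ hlb)

end auxlemmas

/-- Proposition 3.1: C(𝐅) = C(Λ⊗𝐅). -/
theorem stmt4 (n : ℕ)
    (F : Fin n → Measure ℝ) (hF : ∀ i, IsProbabilityMeasure (F i))
    (hFint : ∀ i, Integrable id (F i))
    (Λ : Matrix (Fin n) (Fin n) ℝ) (hΛ : DoublyStochastic Λ) :
    CSet n F = CSet n (quantileMix Λ F) := by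
  classical
  haveI := hF
  set g : Fin n → ℝ → ℝ := fun i u => ∑ j, Λ i j * quantile (F j) u with hg
  have hq_mono : ∀ j, MonotoneOn (quantile (F j)) (Set.Ioo 0 1) :=
    fun j => quantile_monotoneOn (F j)
  have hΛ01 : ∀ i j, Λ i j ≤ 1 := by
    intro i j
    calc Λ i j ≤ ∑ k, Λ i k :=
          Finset.single_le_sum (fun k _ => hΛ.1 i k) (Finset.mem_univ j)
      _ = 1 := hΛ.2.1 i
  have hg_mono : ∀ i, MonotoneOn (g i) (Set.Ioo 0 1) := by
    intro i a ha b hb hab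
    exact Finset.sum_le_sum fun j _ =>
      mul_le_mul_of_nonneg_left (hq_mono j ha hb hab) (hΛ.1 i j)
  have hg_quasi : ∀ i, ∀ u ∈ Set.Ioo (0:ℝ) 1, ∀ ε > (0:ℝ),
      ∃ p' ∈ Set.Ioo 0 u, g i u - ε < g i p' := by
    intro i u hu ε hε
    have hεn : 0 < ε / (n + 1) := by positivity
    have hch : ∀ j : Fin n, ∃ p' ∈ Set.Ioo 0 u,
        quantile (F j) u - ε / (n + 1) < quantile (F j) p' :=
      fun j => quantile_left_quasi (F j) hu.1 hu.2 hεn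
    choose pj hpj hqpj using hch
    have hne : (Finset.univ : Finset (Fin n)).Nonempty := ⟨i, Finset.mem_univ i⟩
    set p' := Finset.univ.sup' hne pj with hp'def
    obtain ⟨j₀, _, hj₀⟩ := Finset.exists_mem_eq_sup' hne pj
    have hp'mem : p' ∈ Set.Ioo 0 u := by rw [hp'def, hj₀]; exact hpj j₀
    refine ⟨p', hp'mem, ?_⟩
    have hterm : ∀ j : Fin n,
        Λ i j * quantile (F j) u - Λ i j * quantile (F j) p' ≤ ε / (n + 1) := by
      intro j
      have h1 : quantile (F j) (pj j) ≤ quantile (F j) p' :=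
        hq_mono j ⟨(hpj j).1, (hpj j).2.trans hu.2⟩
          ⟨hp'mem.1, hp'mem.2.trans hu.2⟩ (Finset.le_sup' pj (Finset.mem_univ j))
      have h2 : quantile (F j) p' ≤ quantile (F j) u :=
        hq_mono j ⟨hp'mem.1, hp'mem.2.trans hu.2⟩ hu hp'mem.2.le
      have h3 : quantile (F j) u - quantile (F j) p' ≤ ε / (n + 1) := by
        have := hqpj j
        linarith
      calc Λ i j * quantile (F j) u - Λ i j * quantile (F j) p'
          = Λ i j * (quantile (F j) u - quantile (F j) p') := by ring
        _ ≤ 1 * (quantile (F j) u - quantile (F j) p') :=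
            mul_le_mul_of_nonneg_right (hΛ01 i j) (by linarith)
        _ ≤ ε / (n + 1) := by linarith
    have hsum : g i u - g i p' ≤ n * (ε / (n + 1)) := by
      rw [hg]
      simp only
      rw [← Finset.sum_sub_distrib]
      calc ∑ j, (Λ i j * quantile (F j) u - Λ i j * quantile (F j) p')
          ≤ ∑ _j : Fin n, ε / (n + 1) := Finset.sum_le_sum fun j _ => hterm j
        _ = n * (ε / (n + 1)) := by rw [Finset.sum_const, Finset.card_univ,
            Fintype.card_fin, nsmul_eq_mul]
    have hlt : (n : ℝ) * (ε / (n + 1)) < ε := by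
      rw [mul_div_assoc']
      rw [div_lt_iff₀ (by positivity)]
      nlinarith [hε]
    linarith
  have key : ∀ u ∈ Set.Ioo (0:ℝ) 1, ∀ i,
      quantile (quantileMix Λ F i) u = g i u := by
    intro u hu i
    exact quantile_map_uniform01 (g i) (hg_mono i) (hg_quasi i) hu
  have hsum_eq : ∀ u ∈ Set.Ioo (0:ℝ) 1,
      ∑ i, quantile (quantileMix Λ F i) u = ∑ i, quantile (F i) u := by
    intro u hu
    rw [Finset.sum_congr rfl fun i _ => key u hu i]
    rw [hg]
    simp only
    rw [Finset.sum_comm]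
    have : ∀ j : Fin n, ∑ i, Λ i j * quantile (F j) u = quantile (F j) u := by
      intro j
      rw [← Finset.sum_mul, hΛ.2.2 j, one_mul]
    exact Finset.sum_congr rfl fun j _ => this j
  have hae : (fun u => ∑ i, quantile (quantileMix Λ F i) u)
      =ᵐ[uniform01] (fun u => ∑ i, quantile (F i) u) := by
    unfold uniform01
    exact (MeasureTheory.ae_restrict_iff' measurableSet_Ioo).2
      (Filter.Eventually.of_forall fun u hu => hsum_eq u hu)
  have hcs : comonoSum n (quantileMix Λ F) = comonoSum n F :=
    Measure.map_congr hae
  unfold CSet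
  rw [hcs]


end
end

section
/- Let ρ be a risk measure that is monotone, and let 𝐅 = (F₁,…,Fₙ) and 𝐆 = (G₁,…,Gₙ) be n-tuples of Borel probability measures on ℝ with Fᵢ ≺_st Gᵢ for every i (and with ρ defined on Dₙ(𝐅) ∪ Dₙ(𝐆)). Then ρ̄(𝐅) ≤ ρ̄(𝐆), i.e., sup{ρ(H) : H ∈ Dₙ(𝐅)} ≤ sup{ρ(H) : H ∈ Dₙ(𝐆)}. -/
open MeasureTheory
open scoped ENNReal BigOperators

noncomputable section

section StAggHelpers
open Set Filter Topology

namespace StAgg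

def cdfR (F : Measure ℝ) (s : ℝ) : ℝ := (F (Set.Iic s)).toReal
def lcdfR (F : Measure ℝ) (s : ℝ) : ℝ := (F (Set.Iio s)).toReal

variable {F G : Measure ℝ} {p : ℝ}

lemma cdfR_nonneg (F : Measure ℝ) (s : ℝ) : 0 ≤ cdfR F s := ENNReal.toReal_nonneg
lemma lcdfR_nonneg (F : Measure ℝ) (s : ℝ) : 0 ≤ lcdfR F s := ENNReal.toReal_nonneg

lemma mono_cdfR [IsFiniteMeasure F] : Monotone (cdfR F) := fun _ _ h =>
  ENNReal.toReal_mono (measure_ne_top _ _) (measure_mono (Iic_subset_Iic.2 h))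

lemma mono_lcdfR [IsFiniteMeasure F] : Monotone (lcdfR F) := fun _ _ h =>
  ENNReal.toReal_mono (measure_ne_top _ _) (measure_mono (Iio_subset_Iio h))

lemma measurable_cdfR [IsFiniteMeasure F] : Measurable (cdfR F) := mono_cdfR.measurable
lemma measurable_lcdfR [IsFiniteMeasure F] : Measurable (lcdfR F) := mono_lcdfR.measurable

lemma lcdfR_le_cdfR [IsFiniteMeasure F] (s : ℝ) : lcdfR F s ≤ cdfR F s :=
  ENNReal.toReal_mono (measure_ne_top _ _) (measure_mono Iio_subset_Iic_self)

lemma cdfR_le_lcdfR_of_lt [IsFiniteMeasure F] {z s : ℝ} (h : z < s) : cdfR F z ≤ lcdfR F s :=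
  ENNReal.toReal_mono (measure_ne_top _ _) (measure_mono (fun x hx => lt_of_le_of_lt hx h))

lemma cdfR_le_one [IsProbabilityMeasure F] (s : ℝ) : cdfR F s ≤ 1 := by
  have := ENNReal.toReal_mono (ENNReal.one_ne_top) (prob_le_one (μ := F) (s := Set.Iic s))
  simpa [cdfR] using this

lemma lcdfR_le_one [IsProbabilityMeasure F] (s : ℝ) : lcdfR F s ≤ 1 :=
  le_trans (lcdfR_le_cdfR s) (cdfR_le_one s)

lemma ofReal_cdfR [IsFiniteMeasure F] (s : ℝ) : ENNReal.ofReal (cdfR F s) = F (Iic s) :=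
  ENNReal.ofReal_toReal (measure_ne_top _ _)

lemma ofReal_lcdfR [IsFiniteMeasure F] (s : ℝ) : ENNReal.ofReal (lcdfR F s) = F (Iio s) :=
  ENNReal.ofReal_toReal (measure_ne_top _ _)

lemma tendsto_cdfR_atTop [IsProbabilityMeasure F] : Tendsto (cdfR F) atTop (𝓝 1) := by
  have h0 := tendsto_measure_Iic_atTop (μ := F)
  rw [measure_univ] at h0
  have h := (ENNReal.tendsto_toReal ENNReal.one_ne_top).comp h0
  exact (by simpa [Function.comp_def] using h : Tendsto (fun s => (F (Iic s)).toReal) atTop (𝓝 1))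

lemma tendsto_cdfR_atBot [IsProbabilityMeasure F] : Tendsto (cdfR F) atBot (𝓝 0) := by
  have hI : (⋂ x : ℝ, Iic x) = (∅ : Set ℝ) := by
    ext y; simp only [mem_iInter, mem_Iic, mem_empty_iff_false, iff_false, not_forall]
    exact ⟨y - 1, by push_neg; linarith⟩
  have h := tendsto_measure_iInter_atBot (μ := F) (s := fun x : ℝ => Iic x)
    (fun i => measurableSet_Iic.nullMeasurableSet) (fun a b hab => Iic_subset_Iic.2 hab)
    ⟨0, measure_ne_top _ _⟩
  rw [hI] at h
  have h2 := (ENNReal.tendsto_toReal (by simp)).comp h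
  exact (by simpa [Function.comp_def] using h2 : Tendsto (fun s => (F (Iic s)).toReal) atBot (𝓝 0))

lemma exists_cdfR_ge [IsProbabilityMeasure F] (hp : p < 1) : ∃ z, p ≤ cdfR F z := by
  obtain ⟨z, hz⟩ := ((tendsto_cdfR_atTop (F := F)).eventually (eventually_gt_nhds hp)).exists
  exact ⟨z, hz.le⟩

lemma bddBelow_quantileSet [IsProbabilityMeasure F] (hp : 0 < p) :
    BddBelow {x : ℝ | p ≤ cdfR F x} := by
  obtain ⟨M, hM⟩ := ((tendsto_cdfR_atBot (F := F)).eventually (eventually_lt_nhds hp)).exists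
  refine ⟨M, fun z hz => ?_⟩
  by_contra hzM
  exact absurd (le_trans hz (mono_cdfR (le_of_lt (lt_of_not_ge hzM)))) (not_le.2 hM)

lemma cdfR_lt_of_lt_quantile [IsProbabilityMeasure F] (hp : 0 < p) {s : ℝ}
    (hs : s < quantile F p) : cdfR F s < p := by
  by_contra h
  exact absurd (csInf_le (bddBelow_quantileSet hp) (le_of_not_gt h)) (not_le.2 hs)

lemma le_cdfR_quantile [IsProbabilityMeasure F] (hp0 : 0 < p) (hp1 : p < 1) :
    p ≤ cdfR F (quantile F p) := by
  set q := quantile F p with hq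
  have hne : {x : ℝ | p ≤ cdfR F x}.Nonempty := exists_cdfR_ge hp1
  have hten : Tendsto (fun n : ℕ => F (Iic (q + 1 / (n + 1)))) atTop (𝓝 (F (Iic q))) := by
    have h := tendsto_measure_iInter_atTop (μ := F) (s := fun n : ℕ => Iic (q + 1 / (n + 1)))
      (fun i => measurableSet_Iic.nullMeasurableSet)
      (fun a b hab => Iic_subset_Iic.2 (by
        have : (1 : ℝ) / (b + 1) ≤ 1 / (a + 1) := by
          apply one_div_le_one_div_of_le
          · positivity
          · have : (a:ℝ) ≤ b := Nat.cast_le.2 hab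
            linarith
        linarith))
      ⟨0, measure_ne_top _ _⟩
    have hI : (⋂ n : ℕ, Iic (q + 1 / (n + 1))) = Iic q := by
      ext y
      simp only [mem_iInter, mem_Iic]
      constructor
      · intro h
        by_contra hy
        push_neg at hy
        obtain ⟨n, hn⟩ := exists_nat_one_div_lt (show (0:ℝ) < y - q by linarith)
        exact absurd (h n) (by push_neg; linarith)
      · intro h n
        have : (0:ℝ) < 1 / (n + 1) := by positivity
        linarith
    rw [hI] at h
    exact h
  have hbound : ∀ n : ℕ, ENNReal.ofReal p ≤ F (Iic (q + 1 / (n + 1))) := by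
    intro n
    have hlt : q < q + 1 / (n + 1) := by
      have : (0:ℝ) < 1 / (n + 1) := by positivity
      linarith
    obtain ⟨z, hz, hzlt⟩ := (csInf_lt_iff (bddBelow_quantileSet hp0) hne).1 hlt
    calc ENNReal.ofReal p ≤ ENNReal.ofReal (cdfR F z) := ENNReal.ofReal_le_ofReal hz
    _ = F (Iic z) := ofReal_cdfR z
    _ ≤ _ := measure_mono (Iic_subset_Iic.2 hzlt.le)
  have := ge_of_tendsto' hten hbound
  calc p = (ENNReal.ofReal p).toReal := by rw [ENNReal.toReal_ofReal hp0.le]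
  _ ≤ cdfR F q := ENNReal.toReal_mono (measure_ne_top _ _) this

lemma lcdfR_quantile_le [IsProbabilityMeasure F] (hp0 : 0 < p) :
    lcdfR F (quantile F p) ≤ p := by
  set q := quantile F p with hq
  have hten : Tendsto (fun n : ℕ => F (Iic (q - 1 / (n + 1)))) atTop (𝓝 (F (Iio q))) := by
    have h := tendsto_measure_iUnion_atTop (μ := F) (s := fun n : ℕ => Iic (q - 1 / (n + 1)))
      (fun a b hab => Iic_subset_Iic.2 (by
        have : (1 : ℝ) / (b + 1) ≤ 1 / (a + 1) := by
          apply one_div_le_one_div_of_le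
          · positivity
          · have : (a:ℝ) ≤ b := Nat.cast_le.2 hab
            linarith
        linarith))
    have hI : (⋃ n : ℕ, Iic (q - 1 / (n + 1))) = Iio q := by
      ext y
      simp only [mem_iUnion, mem_Iic, mem_Iio]
      constructor
      · rintro ⟨n, hn⟩
        have : (0:ℝ) < 1 / (n + 1) := by positivity
        linarith
      · intro h
        obtain ⟨n, hn⟩ := exists_nat_one_div_lt (show (0:ℝ) < q - y by linarith)
        exact ⟨n, by linarith⟩
    rw [hI] at h
    exact h
  have hbound : ∀ n : ℕ, F (Iic (q - 1 / (n + 1))) ≤ ENNReal.ofReal p := by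
    intro n
    have hlt : q - 1 / (n + 1) < q := by
      have : (0:ℝ) < 1 / (n + 1) := by positivity
      linarith
    have := (cdfR_lt_of_lt_quantile hp0 hlt).le
    calc F (Iic (q - 1 / (n+1))) = ENNReal.ofReal (cdfR F (q - 1/(n+1))) := (ofReal_cdfR _).symm
    _ ≤ ENNReal.ofReal p := ENNReal.ofReal_le_ofReal this
  have := le_of_tendsto' hten hbound
  calc lcdfR F q = (F (Iio q)).toReal := rfl
  _ ≤ (ENNReal.ofReal p).toReal := ENNReal.toReal_mono ENNReal.ofReal_ne_top this
  _ ≤ p := by rw [ENNReal.toReal_ofReal hp0.le]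

lemma quantile_le_iff [IsProbabilityMeasure F] (hp0 : 0 < p) (hp1 : p < 1) {x : ℝ} :
    quantile F p ≤ x ↔ p ≤ cdfR F x := by
  constructor
  · intro h
    exact le_trans (le_cdfR_quantile hp0 hp1) (mono_cdfR h)
  · intro h
    exact csInf_le (bddBelow_quantileSet hp0) h

lemma quantile_mono_in_p [IsProbabilityMeasure F] {p p' : ℝ} (hp0 : 0 < p) (hp1 : p' < 1)
    (h : p ≤ p') : quantile F p ≤ quantile F p' :=
  csInf_le_csInf (bddBelow_quantileSet hp0) (exists_cdfR_ge hp1)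
    (fun z hz => le_trans h hz)


lemma ordNull (μ : Measure ℝ) (A : Set ℝ) (h : ∀ s ∈ A, μ (A ∩ Iic s) = 0) : μ A = 0 := by
  by_cases hm : ∃ m ∈ A, ∀ a ∈ A, a ≤ m
  · obtain ⟨m, hmA, hmax⟩ := hm
    have : A ⊆ A ∩ Iic m := fun a ha => ⟨ha, hmax a ha⟩
    exact measure_mono_null this (h m hmA)
  · push_neg at hm
    have hsub : A ⊆ ⋃ q : ℚ, (if μ (A ∩ Iic (q : ℝ)) = 0 then A ∩ Iic (q : ℝ) else ∅) := by
      intro a ha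
      obtain ⟨a', ha', hlt⟩ := hm a ha
      obtain ⟨q, hq1, hq2⟩ := exists_rat_btwn hlt
      have hnull : μ (A ∩ Iic (q : ℝ)) = 0 :=
        measure_mono_null (Set.inter_subset_inter_right A (Iic_subset_Iic.2 hq2.le)) (h a' ha')
      refine mem_iUnion.2 ⟨q, ?_⟩
      rw [if_pos hnull]
      exact ⟨ha, hq1.le⟩
    refine measure_mono_null hsub (measure_iUnion_null fun q => ?_)
    split_ifs with h0
    · exact h0
    · exact measure_empty

lemma ordNull' (μ : Measure ℝ) (A : Set ℝ) (h : ∀ s ∈ A, μ (A ∩ Ici s) = 0) : μ A = 0 := by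
  by_cases hm : ∃ m ∈ A, ∀ a ∈ A, m ≤ a
  · obtain ⟨m, hmA, hmin⟩ := hm
    exact measure_mono_null (show A ⊆ A ∩ Ici m from fun a ha => ⟨ha, hmin a ha⟩) (h m hmA)
  · push_neg at hm
    have hsub : A ⊆ ⋃ q : ℚ, (if μ (A ∩ Ici (q : ℝ)) = 0 then A ∩ Ici (q : ℝ) else ∅) := by
      intro a ha
      obtain ⟨a', ha', hlt⟩ := hm a ha
      obtain ⟨q, hq1, hq2⟩ := exists_rat_btwn hlt
      have hnull : μ (A ∩ Ici (q : ℝ)) = 0 :=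
        measure_mono_null (Set.inter_subset_inter_right A (Ici_subset_Ici.2 hq1.le)) (h a' ha')
      refine mem_iUnion.2 ⟨q, ?_⟩
      rw [if_pos hnull]
      exact ⟨ha, hq2.le⟩
    refine measure_mono_null hsub (measure_iUnion_null fun q => ?_)
    split_ifs with h0
    · exact h0
    · exact measure_empty

lemma Ioc_null_of_cdfR_le [IsFiniteMeasure F] {q s : ℝ} (hle : cdfR F s ≤ cdfR F q) :
    F (Ioc q s) = 0 := by
  rcases le_or_gt s q with h | h
  · rw [Set.Ioc_eq_empty (not_lt.2 h)]
    exact measure_empty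
  · have hunion : Iic q ∪ Ioc q s = Iic s := Iic_union_Ioc_eq_Iic h.le
    have hdisj : Disjoint (Iic q) (Ioc q s) := by
      refine Set.disjoint_left.2 fun x hx hx2 => ?_
      exact absurd hx (not_le.2 hx2.1)
    have hadd : F (Iic q) + F (Ioc q s) = F (Iic s) := by
      rw [← measure_union hdisj measurableSet_Ioc, hunion]
    have htr : cdfR F q + (F (Ioc q s)).toReal = cdfR F s := by
      rw [cdfR, cdfR, ← hadd, ENNReal.toReal_add (measure_ne_top _ _) (measure_ne_top _ _)]
    have hz : (F (Ioc q s)).toReal = 0 := by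
      have := ENNReal.toReal_nonneg (a := F (Ioc q s)); linarith
    rcases (ENNReal.toReal_eq_zero_iff _).1 hz with h0 | h0
    · exact h0
    · exact absurd h0 (measure_ne_top _ _)

lemma Ico_null_of_lcdfR_le [IsFiniteMeasure F] {q s : ℝ} (hle : lcdfR F q ≤ lcdfR F s) :
    F (Ico s q) = 0 := by
  rcases le_or_gt q s with h | h
  · rw [Set.Ico_eq_empty (not_lt.2 h)]
    exact measure_empty
  · have hunion : Iio s ∪ Ico s q = Iio q := Iio_union_Ico_eq_Iio h.le
    have hdisj : Disjoint (Iio s) (Ico s q) := by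
      refine Set.disjoint_left.2 fun x hx hx2 => ?_
      exact absurd hx2.1 (not_le.2 hx)
    have hadd : F (Iio s) + F (Ico s q) = F (Iio q) := by
      rw [← measure_union hdisj measurableSet_Ico, hunion]
    have htr : lcdfR F s + (F (Ico s q)).toReal = lcdfR F q := by
      rw [lcdfR, lcdfR, ← hadd, ENNReal.toReal_add (measure_ne_top _ _) (measure_ne_top _ _)]
    have hz : (F (Ico s q)).toReal = 0 := by
      have := ENNReal.toReal_nonneg (a := F (Ico s q)); linarith
    rcases (ENNReal.toReal_eq_zero_iff _).1 hz with h0 | h0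
    · exact h0
    · exact absurd h0 (measure_ne_top _ _)

lemma flatNull [IsFiniteMeasure F] (q : ℝ) :
    F {s | q < s ∧ cdfR F s ≤ cdfR F q} = 0 := by
  refine ordNull F _ fun s hs => ?_
  exact measure_mono_null (fun a (ha : a ∈ _ ∩ Iic s) => Set.mem_Ioc.2 ⟨ha.1.1, ha.2⟩) (Ioc_null_of_cdfR_le hs.2)

lemma flatNull' [IsFiniteMeasure F] (q : ℝ) :
    F {s | s < q ∧ lcdfR F q ≤ lcdfR F s} = 0 := by
  refine ordNull' F _ fun s hs => ?_
  exact measure_mono_null (fun a (ha : a ∈ _ ∩ Ici s) => Set.mem_Ico.2 ⟨ha.2, ha.1.1⟩) (Ico_null_of_lcdfR_le hs.2)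

lemma leftFlat_null [IsFiniteMeasure F] :
    F {s | ∃ z < s, cdfR F s ≤ cdfR F z} = 0 := by
  have hsub : {s | ∃ z < s, cdfR F s ≤ cdfR F z} ⊆
      ⋃ q : ℚ, {s | (q:ℝ) < s ∧ cdfR F s ≤ cdfR F (q:ℝ)} := by
    rintro s ⟨z, hzs, hle⟩
    obtain ⟨q, hq1, hq2⟩ := exists_rat_btwn hzs
    exact mem_iUnion.2 ⟨q, hq2, le_trans hle (mono_cdfR hq1.le)⟩
  exact measure_mono_null hsub (measure_iUnion_null fun q => flatNull _)

lemma lcdf_one_null [IsProbabilityMeasure F] :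
    F {s | lcdfR F s = 1} = 0 := by
  have hsub : {s | lcdfR F s = 1} ⊆
      ⋃ q : ℚ, {s | s < (q:ℝ) ∧ lcdfR F (q:ℝ) ≤ lcdfR F s} := by
    intro s hs
    obtain ⟨q, hq⟩ := exists_rat_gt s
    exact mem_iUnion.2 ⟨q, hq, by rw [hs]; exact lcdfR_le_one _⟩
  exact measure_mono_null hsub (measure_iUnion_null fun q => flatNull' _)


lemma uniform01_apply {s : Set ℝ} (hs : MeasurableSet s) :
    uniform01 s = volume (s ∩ Ioo 0 1) := Measure.restrict_apply hs

instance : IsProbabilityMeasure uniform01 := by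
  constructor
  rw [uniform01, Measure.restrict_apply MeasurableSet.univ, univ_inter, Real.volume_Ioo]
  simp

lemma vol_Ioo_inter_Iic {c : ℝ} (hc : c ≤ 1) :
    volume (Ioo (0:ℝ) 1 ∩ Iic c) = ENNReal.ofReal c := by
  rcases le_or_gt c 0 with h | h
  · have : Ioo (0:ℝ) 1 ∩ Iic c = ∅ := by
      ext x; simp only [mem_inter_iff, mem_Ioo, mem_Iic, mem_empty_iff_false, iff_false]
      rintro ⟨⟨h1, _⟩, h3⟩; linarith
    rw [this, measure_empty]
    exact (ENNReal.ofReal_eq_zero.2 h).symm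
  · rcases eq_or_lt_of_le hc with heq | hc1
    · subst heq
      have : Ioo (0:ℝ) 1 ∩ Iic 1 = Ioo 0 1 := by
        apply inter_eq_self_of_subset_left
        intro x hx; exact hx.2.le
      rw [this, Real.volume_Ioo]
      norm_num
    · have : Ioo (0:ℝ) 1 ∩ Iic c = Ioc 0 c := by
        ext x; simp only [mem_inter_iff, mem_Ioo, mem_Iic, mem_Ioc]
        constructor
        · rintro ⟨⟨h1, _⟩, h3⟩; exact ⟨h1, h3⟩
        · rintro ⟨h1, h2⟩; exact ⟨⟨h1, lt_of_le_of_lt h2 hc1⟩, h2⟩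
      rw [this, Real.volume_Ioc, sub_zero]

/-- monotone map from ℝ onto (0,1) -/
def sig (v : ℝ) : ℝ := 1/2 + (v / (1 + |v|)) / 2

def rr (t : ℝ) : ℝ := (2*t - 1) / (1 - |2*t - 1|)

lemma mono_w : Monotone (fun v : ℝ => v / (1 + |v|)) := by
  intro a b h
  have ha : (0:ℝ) < 1 + |a| := by positivity
  have hb : (0:ℝ) < 1 + |b| := by positivity
  rw [div_le_div_iff₀ ha hb]
  rcases abs_cases a with ⟨ha1, _⟩ | ⟨ha1, _⟩ <;> rcases abs_cases b with ⟨hb1, _⟩ | ⟨hb1, _⟩ <;>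
    nlinarith

lemma w_mem (v : ℝ) : |v / (1 + |v|)| < 1 := by
  have ha : (0:ℝ) < 1 + |v| := by positivity
  rw [abs_div, abs_of_pos ha, div_lt_one ha]
  linarith [abs_nonneg v]

lemma mono_sig : Monotone sig := fun a b h => by
  have := mono_w h
  simp only [sig]
  linarith

lemma sig_mem (v : ℝ) : sig v ∈ Ioo (0:ℝ) 1 := by
  have := abs_lt.1 (w_mem v)
  constructor <;> simp only [sig] <;> [linarith; linarith]

lemma measurable_rr : Measurable rr := by
  apply Measurable.div
  · fun_prop
  · fun_prop

lemma sig_rr {t : ℝ} (ht : t ∈ Ioo (0:ℝ) 1) : sig (rr t) = t := by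
  set s := 2*t - 1 with hs
  have habs : |s| < 1 := by
    rw [abs_lt]; constructor <;> [linarith [ht.1]; linarith [ht.2]]
  have hpos : (0:ℝ) < 1 - |s| := by linarith
  have hrr : rr t = s / (1 - |s|) := rfl
  have habs2 : |rr t| = |s| / (1 - |s|) := by
    rw [hrr, abs_div, abs_of_pos hpos]
  have hden : 1 + |rr t| = 1 / (1 - |s|) := by
    rw [habs2]; field_simp; ring
  have hw : rr t / (1 + |rr t|) = s := by
    rw [hden, hrr]
    field_simp
  simp only [sig, hw, hs]
  ring

/-- measurable version of the quantile function -/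
def qtil (G : Measure ℝ) (v : ℝ) : ℝ := quantile G (sig (rr v))

lemma mono_quantile_sig (G : Measure ℝ) [IsProbabilityMeasure G] :
    Monotone (fun v => quantile G (sig v)) := fun a b h =>
  quantile_mono_in_p (sig_mem a).1 (sig_mem b).2 (mono_sig h)

lemma measurable_qtil (G : Measure ℝ) [IsProbabilityMeasure G] : Measurable (qtil G) :=
  (mono_quantile_sig G).measurable.comp measurable_rr

lemma qtil_eq (G : Measure ℝ) {v : ℝ} (hv : v ∈ Ioo (0:ℝ) 1) : qtil G v = quantile G v := by
  rw [qtil, sig_rr hv]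

/-- Inverse transform sampling. -/
lemma map_qtil (G : Measure ℝ) [IsProbabilityMeasure G] :
    uniform01.map (qtil G) = G := by
  have hmeas := measurable_qtil G
  haveI : IsProbabilityMeasure (uniform01.map (qtil G)) :=
    Measure.isProbabilityMeasure_map hmeas.aemeasurable
  refine Measure.ext_of_Iic _ _ (fun x => ?_)
  rw [Measure.map_apply hmeas measurableSet_Iic,
    uniform01_apply (hmeas measurableSet_Iic)]
  have hset : qtil G ⁻¹' Iic x ∩ Ioo 0 1 = Ioo (0:ℝ) 1 ∩ Iic (cdfR G x) := by
    ext u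
    simp only [mem_inter_iff, mem_preimage, mem_Iic, mem_Ioo]
    constructor
    · rintro ⟨h1, h2⟩
      refine ⟨h2, ?_⟩
      rw [qtil_eq G h2] at h1
      exact (quantile_le_iff h2.1 h2.2).1 h1
    · rintro ⟨h2, h1⟩
      refine ⟨?_, h2⟩
      rw [qtil_eq G h2]
      exact (quantile_le_iff h2.1 h2.2).2 h1
  rw [hset, vol_Ioo_inter_Iic (cdfR_le_one x), ofReal_cdfR]

/-- The (randomized) distributional transform. -/
def Tmap (F : Measure ℝ) : ℝ × ℝ → ℝ :=
  fun p => lcdfR F p.1 + p.2 * (cdfR F p.1 - lcdfR F p.1)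

lemma measurable_Tmap (F : Measure ℝ) [IsFiniteMeasure F] : Measurable (Tmap F) :=
  ((measurable_lcdfR.comp measurable_fst).add
    (measurable_snd.mul ((measurable_cdfR.comp measurable_fst).sub
      (measurable_lcdfR.comp measurable_fst))))

lemma meas_singleton (F : Measure ℝ) [IsFiniteMeasure F] (q : ℝ) :
    F {q} = ENNReal.ofReal (cdfR F q - lcdfR F q) := by
  have h1 : Iio q ∪ {q} = Iic q := Set.Iio_union_right
  have hdisj : Disjoint (Iio q) ({q} : Set ℝ) := by
    rw [Set.disjoint_singleton_right]; simp
  have hadd : F (Iio q) + F {q} = F (Iic q) := by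
    rw [← measure_union hdisj (measurableSet_singleton q), h1]
  have : lcdfR F q + (F {q}).toReal = cdfR F q := by
    rw [lcdfR, cdfR, ← hadd, ENNReal.toReal_add (measure_ne_top _ _) (measure_ne_top _ _)]
  rw [show cdfR F q - lcdfR F q = (F {q}).toReal by linarith,
    ENNReal.ofReal_toReal (measure_ne_top _ _)]

lemma prod_null_fst {μ : Measure ℝ} {ν : Measure (Fin 1 → ℝ)} : True := trivial

/-- preimage of a null set under a map with known pushforward is null -/
lemma null_preimage {α β : Type*} [MeasurableSpace α] [MeasurableSpace β]
    (m : Measure α) (f : α → β) (hf : Measurable f) (ν : Measure β)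
    (hmap : m.map f = ν) (B : Set β) (hB : ν B = 0) : m (f ⁻¹' B) = 0 := by
  have h1 : ν (toMeasurable ν B) = 0 := by rwa [measure_toMeasurable]
  have h2 : m (f ⁻¹' toMeasurable ν B) = 0 := by
    rw [← Measure.map_apply hf (measurableSet_toMeasurable ν B), hmap]
    exact h1
  exact measure_mono_null (preimage_mono (subset_toMeasurable ν B)) h2

lemma uniform01_compl_Ioo : uniform01 ((Ioo (0:ℝ) 1)ᶜ) = 0 := by
  rw [uniform01_apply measurableSet_Ioo.compl, compl_inter_self]
  exact measure_empty

/-- Law of the distributional transform is uniform. -/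
lemma map_Tmap (F : Measure ℝ) [IsProbabilityMeasure F] :
    (F.prod uniform01).map (Tmap F) = uniform01 := by
  have hmeas := measurable_Tmap F
  haveI : IsProbabilityMeasure ((F.prod uniform01).map (Tmap F)) :=
    Measure.isProbabilityMeasure_map hmeas.aemeasurable
  set m := F.prod uniform01 with hm
  have hfst : ∀ (Z : Set ℝ), F Z = 0 → m {p : ℝ × ℝ | p.1 ∈ Z} = 0 := by
    intro Z hZ
    have : m.map Prod.fst = F := by
      rw [hm, Measure.map_fst_prod, measure_univ, one_smul]
    exact null_preimage m Prod.fst measurable_fst F this Z hZ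
  have hsnd : m {p : ℝ × ℝ | p.2 ∈ (Ioo (0:ℝ) 1)ᶜ} = 0 := by
    have : m.map Prod.snd = uniform01 := by
      rw [hm, Measure.map_snd_prod, measure_univ, one_smul]
    exact null_preimage m Prod.snd measurable_snd uniform01 this _ uniform01_compl_Ioo
  refine Measure.ext_of_Iic _ _ (fun t => ?_)
  rw [Measure.map_apply hmeas measurableSet_Iic]
  rw [uniform01_apply measurableSet_Iic]
  rcases le_or_gt t 0 with ht0 | ht0
  · -- t ≤ 0
    have hrhs : Iic t ∩ Ioo (0:ℝ) 1 = ∅ := by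
      ext x; simp only [mem_inter_iff, mem_Iic, mem_Ioo, mem_empty_iff_false, iff_false]
      rintro ⟨h1, h2, _⟩; linarith
    rw [hrhs, measure_empty]
    set Z := {s : ℝ | ∃ z < s, cdfR F s ≤ cdfR F z}
    have hsub : Tmap F ⁻¹' Iic t ⊆ {p : ℝ × ℝ | p.1 ∈ Z} ∪ {p : ℝ × ℝ | p.2 ∈ (Ioo (0:ℝ) 1)ᶜ} := by
      rintro ⟨s, u⟩ hp
      simp only [mem_preimage, mem_Iic, Tmap] at hp
      by_cases hu : u ∈ Ioo (0:ℝ) 1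
      · left
        have h1 : 0 ≤ lcdfR F s := lcdfR_nonneg F s
        have h2 : 0 ≤ cdfR F s - lcdfR F s := by linarith [lcdfR_le_cdfR (F := F) s]
        have h3 : 0 ≤ u * (cdfR F s - lcdfR F s) := mul_nonneg hu.1.le h2
        have hl0 : lcdfR F s = 0 := by linarith
        have hd0 : cdfR F s - lcdfR F s = 0 := by
          by_contra hne
          have : 0 < cdfR F s - lcdfR F s := lt_of_le_of_ne h2 (Ne.symm hne)
          nlinarith [hu.1]
        have hc0 : cdfR F s = 0 := by linarith
        exact ⟨s - 1, by linarith, by rw [hc0]; exact cdfR_nonneg F _⟩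
      · right; exact hu
    exact measure_mono_null hsub
      (measure_union_null (hfst Z leftFlat_null) hsnd)
  rcases lt_or_ge t 1 with ht1 | ht1
  · -- 0 < t < 1
    set q := quantile F t with hqdef
    have hq1 : t ≤ cdfR F q := le_cdfR_quantile ht0 ht1
    have hq2 : lcdfR F q ≤ t := lcdfR_quantile_le ht0
    have hq3 : ∀ s, s < q → cdfR F s < t := fun s hs => cdfR_lt_of_lt_quantile ht0 hs
    set δ := cdfR F q - lcdfR F q with hδdef
    have hδ0 : 0 ≤ δ := by simp only [hδdef]; linarith [lcdfR_le_cdfR (F := F) q]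
    set C : Set ℝ := Ioo 0 1 ∩ {u : ℝ | lcdfR F q + u * δ ≤ t} with hCdef
    have hCmeas : MeasurableSet C :=
      measurableSet_Ioo.inter ((measurable_const.add (measurable_id.mul_const δ))
        measurableSet_Iic)
    set A : Set (ℝ × ℝ) := Iio q ×ˢ Ioo 0 1 with hAdef
    set B : Set (ℝ × ℝ) := {q} ×ˢ C with hBdef
    set Z := {s : ℝ | q < s ∧ cdfR F s ≤ cdfR F q} with hZdef
    have hABsub : A ∪ B ⊆ Tmap F ⁻¹' Iic t := by
      rintro ⟨s, u⟩ hp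
      simp only [hAdef, hBdef, mem_union, mem_prod, mem_Iio, mem_singleton_iff] at hp
      simp only [mem_preimage, mem_Iic, Tmap]
      rcases hp with ⟨hs, hu⟩ | ⟨hs, hu⟩
      · have hd : 0 ≤ cdfR F s - lcdfR F s := by linarith [lcdfR_le_cdfR (F := F) s]
        have hud : u * (cdfR F s - lcdfR F s) ≤ cdfR F s - lcdfR F s := by nlinarith [hu.2]
        have hlt := hq3 s hs
        linarith
      · subst hs
        simpa only [hδdef, mem_setOf_eq] using hu.2
    have hsubAB : Tmap F ⁻¹' Iic t ⊆
        A ∪ B ∪ ({p : ℝ × ℝ | p.1 ∈ Z} ∪ {p : ℝ × ℝ | p.2 ∈ (Ioo (0:ℝ) 1)ᶜ}) := by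
      rintro ⟨s, u⟩ hp
      simp only [mem_preimage, mem_Iic, Tmap] at hp
      by_cases hu : u ∈ Ioo (0:ℝ) 1
      swap
      · exact Or.inr (Or.inr hu)
      rcases lt_trichotomy s q with hs | hs | hs
      · exact Or.inl (Or.inl ⟨hs, hu⟩)
      · subst hs
        exact Or.inl (Or.inr ⟨rfl, hu, by simpa only [hδdef, mem_setOf_eq] using hp⟩)
      · refine Or.inr (Or.inl ?_)
        have hcl : cdfR F q ≤ lcdfR F s := cdfR_le_lcdfR_of_lt hs
        have hd : 0 ≤ cdfR F s - lcdfR F s := by linarith [lcdfR_le_cdfR (F := F) s]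
        have hud : u * (cdfR F s - lcdfR F s) ≤ t - lcdfR F s := by linarith
        have hneg : t - lcdfR F s ≤ 0 := by linarith
        have hdz : cdfR F s - lcdfR F s = 0 := by
          by_contra hne
          have hpos : 0 < cdfR F s - lcdfR F s := lt_of_le_of_ne hd (Ne.symm hne)
          nlinarith [hu.1]
        refine ⟨hs, ?_⟩
        have h0 : u * (cdfR F s - lcdfR F s) = 0 := by rw [hdz]; ring
        linarith
    have hdisjAB : Disjoint A B := by
      refine Set.disjoint_left.2 ?_
      rintro ⟨s, u⟩ hA hB
      simp only [hAdef, hBdef, mem_prod, mem_Iio, mem_singleton_iff] at hA hB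
      exact absurd hB.1 (ne_of_lt hA.1)
    have hmA : m A = ENNReal.ofReal (lcdfR F q) := by
      rw [hAdef, hm, Measure.prod_prod, ofReal_lcdfR]
      have : uniform01 (Ioo (0:ℝ) 1) = 1 := by
        rw [uniform01_apply measurableSet_Ioo, inter_self, Real.volume_Ioo]; norm_num
      rw [this, mul_one]
    have hIoo1 : uniform01 (Ioo (0:ℝ) 1) = 1 := by
      rw [uniform01_apply measurableSet_Ioo, inter_self, Real.volume_Ioo]; norm_num
    have hmB : m B = ENNReal.ofReal (t - lcdfR F q) := by
      rw [hBdef, hm, Measure.prod_prod, meas_singleton, ← hδdef]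
      rcases eq_or_lt_of_le hδ0 with hδz | hδpos
      · rw [← hδz]
        have hlt : lcdfR F q = t := by
          have : cdfR F q = lcdfR F q + δ := by rw [hδdef]; ring
          rw [← hδz] at this
          simp only [add_zero] at this
          linarith
        simp [hlt]
      · have hCU : uniform01 C = ENNReal.ofReal ((t - lcdfR F q) / δ) := by
          rw [uniform01_apply hCmeas]
          have hCeq : C ∩ Ioo 0 1 = Ioo (0:ℝ) 1 ∩ Iic ((t - lcdfR F q) / δ) := by
            rw [hCdef]
            ext u
            simp only [mem_inter_iff, mem_Ioo, mem_setOf_eq, mem_Iic]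
            constructor
            · rintro ⟨⟨h1, h2⟩, _⟩
              exact ⟨h1, (le_div_iff₀ hδpos).2 (by linarith)⟩
            · rintro ⟨h1, h2⟩
              have := (le_div_iff₀ hδpos).1 h2
              exact ⟨⟨h1, by linarith⟩, h1⟩
          rw [hCeq, vol_Ioo_inter_Iic]
          rw [div_le_one hδpos]
          linarith
        rw [hCU, ← ENNReal.ofReal_mul hδ0]
        congr 1
        field_simp
    have hmeasB : MeasurableSet B := (measurableSet_singleton q).prod hCmeas
    have hmeasA : MeasurableSet A := measurableSet_Iio.prod measurableSet_Ioo
    have hupper : m (Tmap F ⁻¹' Iic t) ≤ m A + m B := by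
      calc m (Tmap F ⁻¹' Iic t)
          ≤ m ((A ∪ B) ∪ ({p : ℝ × ℝ | p.1 ∈ Z} ∪ {p : ℝ × ℝ | p.2 ∈ (Ioo (0:ℝ) 1)ᶜ})) :=
            measure_mono hsubAB
        _ ≤ m (A ∪ B) + m ({p : ℝ × ℝ | p.1 ∈ Z} ∪ {p : ℝ × ℝ | p.2 ∈ (Ioo (0:ℝ) 1)ᶜ}) :=
            measure_union_le _ _
        _ = m (A ∪ B) := by
            rw [measure_union_null (hfst Z (flatNull q)) hsnd, add_zero]
        _ ≤ m A + m B := measure_union_le _ _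
    have hlower : m A + m B ≤ m (Tmap F ⁻¹' Iic t) := by
      rw [← measure_union hdisjAB hmeasB]
      exact measure_mono hABsub
    have hE : m (Tmap F ⁻¹' Iic t) = ENNReal.ofReal t := by
      rw [le_antisymm hupper hlower, hmA, hmB, ← ENNReal.ofReal_add (lcdfR_nonneg F q)
        (by linarith)]
      congr 1
      ring
    rw [hE, inter_comm, vol_Ioo_inter_Iic ht1.le]
  · -- 1 ≤ t
    have hrhs : Iic t ∩ Ioo (0:ℝ) 1 = Ioo 0 1 := by
      apply inter_eq_self_of_subset_right
      intro x hx; exact le_trans hx.2.le ht1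
    rw [hrhs]
    have h1 : volume (Ioo (0:ℝ) 1) = 1 := by rw [Real.volume_Ioo]; norm_num
    rw [h1]
    have hsup : (univ : Set ℝ) ×ˢ Ioo (0:ℝ) 1 ⊆ Tmap F ⁻¹' Iic t := by
      rintro ⟨s, u⟩ hp
      simp only [mem_prod, mem_univ, mem_Ioo, true_and] at hp
      simp only [mem_preimage, mem_Iic, Tmap]
      have hd : 0 ≤ cdfR F s - lcdfR F s := by linarith [lcdfR_le_cdfR (F := F) s]
      have hud : u * (cdfR F s - lcdfR F s) ≤ cdfR F s - lcdfR F s := by nlinarith [hp.2]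
      have hle1 := cdfR_le_one (F := F) s
      linarith
    have hle := measure_mono (μ := m) hsup
    rw [hm, Measure.prod_prod, measure_univ] at hle
    have : uniform01 (Ioo (0:ℝ) 1) = 1 := by
      rw [uniform01_apply measurableSet_Ioo, inter_self, h1]
    rw [this, mul_one] at hle
    exact le_antisymm prob_le_one hle

lemma le_qtil_transform (F G : Measure ℝ) [IsProbabilityMeasure F] [IsProbabilityMeasure G]
    (hst : ∀ x : ℝ, G (Iic x) ≤ F (Iic x)) {s : ℝ}
    (h1 : ¬∃ z < s, cdfR F s ≤ cdfR F z) (h2 : lcdfR F s ≠ 1) {u : ℝ}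
    (hu : u ∈ Ioo (0:ℝ) 1) :
    s ≤ qtil G (Tmap F (s, u)) := by
  have hveq : Tmap F (s, u) = lcdfR F s + u * (cdfR F s - lcdfR F s) := rfl
  set v := Tmap F (s, u) with hvdef
  have hd : 0 ≤ cdfR F s - lcdfR F s := by linarith [lcdfR_le_cdfR (F := F) s]
  have hGF : ∀ z, cdfR G z ≤ cdfR F z := fun z =>
    ENNReal.toReal_mono (measure_ne_top _ _) (hst z)
  have hcs : 0 < cdfR F s := by
    rcases lt_or_eq_of_le (cdfR_nonneg F s) with h | h
    · exact h
    · exact absurd ⟨s - 1, by linarith, by rw [← h]; exact cdfR_nonneg F _⟩ h1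
  have hvIoo : v ∈ Ioo (0:ℝ) 1 := by
    rcases eq_or_lt_of_le hd with hdz | hdp
    · have hveq2 : v = cdfR F s := by
        have h0 : cdfR F s - lcdfR F s = 0 := by linarith
        rw [hveq, h0, mul_zero, add_zero]
        linarith
      constructor
      · rw [hveq2]; exact hcs
      · rw [hveq2]
        rcases lt_or_eq_of_le (cdfR_le_one (F := F) s) with h | h
        · exact h
        · exfalso
          apply h2
          have : lcdfR F s = cdfR F s := by linarith
          rw [this, h]
    · constructor
      · rw [hveq]
        nlinarith [lcdfR_nonneg F s, hu.1]
      · rw [hveq]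
        nlinarith [cdfR_le_one (F := F) s, hu.2]
  rw [qtil_eq G hvIoo]
  refine le_csInf (exists_cdfR_ge (F := G) hvIoo.2) ?_
  intro z hz
  by_contra hzs
  push_neg at hzs
  have hzF : cdfR F z ≤ lcdfR F s := cdfR_le_lcdfR_of_lt hzs
  have hzmem : v ≤ cdfR G z := hz
  rcases eq_or_lt_of_le hd with hdz | hdp
  · have hveq2 : v = cdfR F s := by
        have h0 : cdfR F s - lcdfR F s = 0 := by linarith
        rw [hveq, h0, mul_zero, add_zero]
        linarith
    refine h1 ⟨z, hzs, ?_⟩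
    have := hGF z
    have := lcdfR_le_cdfR (F := F) s
    linarith
  · have hlv : lcdfR F s < v := by rw [hveq]; nlinarith [hu.1]
    have := hGF z
    linarith

lemma exists_dominating (n : ℕ) (F G : Fin n → Measure ℝ)
    (hF : ∀ i, IsProbabilityMeasure (F i)) (hG : ∀ i, IsProbabilityMeasure (G i))
    (hst : ∀ i, ∀ x : ℝ, (G i) (Iic x) ≤ (F i) (Iic x))
    (μ : Measure (Fin n → ℝ)) (hμ : IsProbabilityMeasure μ)
    (hmarg : ∀ i, μ.map (fun x => x i) = F i) :
    ∃ ν : Measure (Fin n → ℝ), IsProbabilityMeasure ν ∧ (∀ i, ν.map (fun x => x i) = G i) ∧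
      (∀ c : ℝ, (ν.map (fun x => ∑ i, x i)) (Iic c) ≤ (μ.map (fun x => ∑ i, x i)) (Iic c)) := by
  haveI := hμ
  set m : Measure ((Fin n → ℝ) × ℝ) := μ.prod uniform01 with hmdef
  haveI : IsProbabilityMeasure m := by rw [hmdef]; infer_instance
  set Y : ((Fin n → ℝ) × ℝ) → (Fin n → ℝ) :=
    fun p i => qtil (G i) (Tmap (F i) (p.1 i, p.2)) with hYdef
  have hYm : Measurable Y := by
    refine measurable_pi_lambda _ (fun i => ?_)
    haveI := hF i; haveI := hG i
    exact (measurable_qtil (G i)).comp ((measurable_Tmap (F i)).comp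
      (((measurable_pi_apply i).comp measurable_fst).prodMk measurable_snd))
  have hmfst : m.map Prod.fst = μ := by
    rw [hmdef, Measure.map_fst_prod, measure_univ, one_smul]
  have hmargm : ∀ i, m.map (fun p : (Fin n → ℝ) × ℝ => p.1 i) = F i := by
    intro i
    have : (fun p : (Fin n → ℝ) × ℝ => p.1 i)
        = (fun x : Fin n → ℝ => x i) ∘ Prod.fst := rfl
    rw [this, ← Measure.map_map (measurable_pi_apply i) measurable_fst, hmfst, hmarg i]
  refine ⟨m.map Y, Measure.isProbabilityMeasure_map hYm.aemeasurable, ?_, ?_⟩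
  · intro i
    haveI := hF i; haveI := hG i
    rw [Measure.map_map (measurable_pi_apply i) hYm]
    have hcomp : (fun x : Fin n → ℝ => x i) ∘ Y
        = (fun su : ℝ × ℝ => qtil (G i) (Tmap (F i) su))
          ∘ (Prod.map (fun x : Fin n → ℝ => x i) (id : ℝ → ℝ)) := rfl
    rw [hcomp, ← Measure.map_map
      (show Measurable (fun su : ℝ × ℝ => qtil (G i) (Tmap (F i) su)) from
        (measurable_qtil (G i)).comp (measurable_Tmap (F i)))
      ((measurable_pi_apply i).prodMap measurable_id)]
    have hprodmap : m.map (Prod.map (fun x : Fin n → ℝ => x i) (id : ℝ → ℝ))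
        = (F i).prod uniform01 := by
      rw [hmdef, ← Measure.map_prod_map _ _ (measurable_pi_apply i) measurable_id,
        hmarg i, Measure.map_id]
    rw [hprodmap]
    have hchain : ((F i).prod uniform01).map (fun su : ℝ × ℝ => qtil (G i) (Tmap (F i) su))
        = (((F i).prod uniform01).map (Tmap (F i))).map (qtil (G i)) := by
      rw [Measure.map_map (measurable_qtil (G i)) (measurable_Tmap (F i))]
      rfl
    rw [hchain, map_Tmap (F i), map_qtil (G i)]
  · intro c
    have hsum : Measurable (fun x : Fin n → ℝ => ∑ i, x i) :=
      Finset.measurable_sum _ (fun i _ => measurable_pi_apply i)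
    rw [Measure.map_map hsum hYm, Measure.map_apply (hsum.comp hYm) measurableSet_Iic]
    have hμside : (μ.map (fun x : Fin n → ℝ => ∑ i, x i)) (Iic c)
        = m ((( fun x : Fin n → ℝ => ∑ i, x i) ∘ Prod.fst) ⁻¹' Iic c) := by
      rw [← hmfst, Measure.map_map hsum measurable_fst]
      exact Measure.map_apply (hsum.comp measurable_fst) measurableSet_Iic
    rw [hμside]
    have hae : ∀ᵐ p ∂m, (∑ i, p.1 i) ≤ ∑ i, Y p i := by
      have hu : ∀ᵐ p ∂m, p.2 ∈ Ioo (0:ℝ) 1 := by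
        rw [ae_iff]
        have heq : {p : (Fin n → ℝ) × ℝ | ¬ p.2 ∈ Ioo (0:ℝ) 1}
            = Prod.snd ⁻¹' (Ioo (0:ℝ) 1)ᶜ := rfl
        rw [heq]
        refine null_preimage m Prod.snd measurable_snd uniform01 ?_ _ uniform01_compl_Ioo
        rw [hmdef, Measure.map_snd_prod, measure_univ, one_smul]
      have hxi : ∀ i, ∀ᵐ p ∂m,
          ¬ (p.1 i ∈ {s : ℝ | ∃ z < s, cdfR (F i) s ≤ cdfR (F i) z}
              ∪ {s : ℝ | lcdfR (F i) s = 1}) := by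
        intro i
        haveI := hF i
        rw [ae_iff]
        have heq : {p : (Fin n → ℝ) × ℝ | ¬ ¬ (p.1 i ∈
              ({s : ℝ | ∃ z < s, cdfR (F i) s ≤ cdfR (F i) z}
                ∪ {s : ℝ | lcdfR (F i) s = 1}))}
            = (fun p : (Fin n → ℝ) × ℝ => p.1 i) ⁻¹'
              ({s : ℝ | ∃ z < s, cdfR (F i) s ≤ cdfR (F i) z}
                ∪ {s : ℝ | lcdfR (F i) s = 1}) := by
          ext p; simp only [mem_setOf_eq, not_not, mem_preimage]
        rw [heq]
        refine null_preimage m _ ((measurable_pi_apply i).comp measurable_fst) (F i)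
          (hmargm i) _ ?_
        exact measure_union_null leftFlat_null lcdf_one_null
      have hall := ((ae_all_iff).2 hxi).and hu
      refine hall.mono ?_
      rintro p ⟨hp1, hp2⟩
      refine Finset.sum_le_sum (fun i _ => ?_)
      haveI := hF i; haveI := hG i
      have h1 : ¬∃ z < p.1 i, cdfR (F i) (p.1 i) ≤ cdfR (F i) z :=
        fun hc => hp1 i (Or.inl hc)
      have h2 : lcdfR (F i) (p.1 i) ≠ 1 := fun hc => hp1 i (Or.inr hc)
      exact le_qtil_transform (F i) (G i) (hst i) h1 h2 hp2
    refine measure_mono_ae (hae.mono fun p hp hmem => ?_)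
    change (∑ i, Y p i) ≤ c at hmem; change (∑ i, p.1 i) ≤ c
    exact le_trans hp hmem

end StAgg


end StAggHelpers

/-- Proposition 4.1(i): monotone risk measures and componentwise stochastic order. -/
theorem stmt6 (n : ℕ) (ρ : Measure ℝ → ℝ) (hρ : MonotoneRisk ρ)
    (F G : Fin n → Measure ℝ)
    (hF : ∀ i, IsProbabilityMeasure (F i)) (hG : ∀ i, IsProbabilityMeasure (G i))
    (hst : ∀ i, StOrder (F i) (G i)) :
    worstCase ρ n F ≤ worstCase ρ n G := by
  unfold worstCase
  refine sSup_le ?_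
  rintro a ⟨H, hH, rfl⟩
  obtain ⟨μ, hμp, hμm, rfl⟩ := hH
  obtain ⟨ν, hνp, hνm, hord⟩ := StAgg.exists_dominating n F G hF hG hst μ hμp hμm
  have hsum : Measurable (fun x : Fin n → ℝ => ∑ i, x i) :=
    Finset.measurable_sum _ (fun i _ => measurable_pi_apply i)
  haveI := hμp; haveI := hνp
  have hle : ρ (μ.map (fun x => ∑ i, x i)) ≤ ρ (ν.map (fun x => ∑ i, x i)) :=
    hρ _ _ (Measure.isProbabilityMeasure_map hsum.aemeasurable)
      (Measure.isProbabilityMeasure_map hsum.aemeasurable) hord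
  have hmem : (ν.map (fun x => ∑ i, x i)) ∈ aggSet n G := ⟨ν, hνp, hνm, rfl⟩
  refine le_trans ?_ (le_sSup (Set.mem_image_of_mem _ hmem))
  exact EReal.coe_le_coe_iff.2 hle

end
end

section
/- Let Λ be an n×n doubly stochastic matrix and 𝐅 = (F₁,…,Fₙ) an n-tuple of Borel probability measures on ℝ. The following are equivalent: (a) (Λ𝐅)ᵢ ≺_st Fᵢ for every i; (b) Fᵢ ≺_st (Λ𝐅)ᵢ for every i; (c) Λ𝐅 = 𝐅 (componentwise equality of measures). -/
open MeasureTheory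
open scoped ENNReal BigOperators

noncomputable section

section Aux

variable {n : ℕ}

lemma distMix_apply (Λ : Matrix (Fin n) (Fin n) ℝ) (F : Fin n → Measure ℝ) (i : Fin n)
    (s : Set ℝ) : distMix Λ F i s = ∑ j, ENNReal.ofReal (Λ i j) * F j s := by
  simp [distMix, Measure.finset_sum_apply, Measure.smul_apply, smul_eq_mul]

lemma distMix_ne_top (Λ : Matrix (Fin n) (Fin n) ℝ) (F : Fin n → Measure ℝ)
    (hF : ∀ i, IsProbabilityMeasure (F i)) (i : Fin n) (s : Set ℝ) :
    distMix Λ F i s ≠ ⊤ := by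
  rw [distMix_apply]
  refine (ENNReal.sum_lt_top.mpr fun j _ => ?_).ne
  haveI := hF j
  exact ENNReal.mul_lt_top ENNReal.ofReal_lt_top
    (prob_le_one.trans_lt ENNReal.one_lt_top)

lemma distMix_toReal (Λ : Matrix (Fin n) (Fin n) ℝ) (hΛ : DoublyStochastic Λ)
    (F : Fin n → Measure ℝ) (hF : ∀ i, IsProbabilityMeasure (F i)) (i : Fin n)
    (s : Set ℝ) :
    (distMix Λ F i s).toReal = ∑ j, Λ i j * (F j s).toReal := by
  rw [distMix_apply, ENNReal.toReal_sum]
  · refine Finset.sum_congr rfl fun j _ => ?_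
    rw [ENNReal.toReal_mul, ENNReal.toReal_ofReal (hΛ.1 i j)]
  · intro j _
    haveI := hF j
    exact (ENNReal.mul_lt_top ENNReal.ofReal_lt_top
      (prob_le_one.trans_lt ENNReal.one_lt_top)).ne

lemma key_eq (Λ : Matrix (Fin n) (Fin n) ℝ) (hΛ : DoublyStochastic Λ)
    (F : Fin n → Measure ℝ) (hF : ∀ i, IsProbabilityMeasure (F i))
    (h : (∀ i x, (distMix Λ F i (Set.Iic x)).toReal ≤ (F i (Set.Iic x)).toReal) ∨
         (∀ i x, (F i (Set.Iic x)).toReal ≤ (distMix Λ F i (Set.Iic x)).toReal)) :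
    ∀ i, distMix Λ F i = F i := by
  have hsum : ∀ x : ℝ, ∑ i, (distMix Λ F i (Set.Iic x)).toReal
      = ∑ i, (F i (Set.Iic x)).toReal := by
    intro x
    calc ∑ i, (distMix Λ F i (Set.Iic x)).toReal
        = ∑ i, ∑ j, Λ i j * (F j (Set.Iic x)).toReal := by
          exact Finset.sum_congr rfl fun i _ => distMix_toReal Λ hΛ F hF i _
      _ = ∑ j, (∑ i, Λ i j) * (F j (Set.Iic x)).toReal := by
          rw [Finset.sum_comm]
          exact Finset.sum_congr rfl fun j _ => (Finset.sum_mul ..).symm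
      _ = ∑ j, (F j (Set.Iic x)).toReal := by
          refine Finset.sum_congr rfl fun j _ => ?_
          rw [hΛ.2.2 j, one_mul]
  have heq : ∀ i x, (distMix Λ F i (Set.Iic x)).toReal = (F i (Set.Iic x)).toReal := by
    rcases h with h | h
    · intro i x
      exact (Finset.sum_eq_sum_iff_of_le (fun i _ => h i x)).mp (hsum x) i
        (Finset.mem_univ i)
    · intro i x
      exact (Finset.sum_eq_sum_iff_of_le (fun i _ => h i x)).mp (hsum x).symm i
        (Finset.mem_univ i) |>.symm
  intro i
  haveI : IsFiniteMeasure (distMix Λ F i) :=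
    ⟨(distMix_ne_top Λ F hF i Set.univ).lt_top⟩
  haveI := hF i
  refine Measure.ext_of_Iic _ _ fun x => ?_
  exact (ENNReal.toReal_eq_toReal_iff' (distMix_ne_top Λ F hF i _) (measure_ne_top _ _)).mp
    (heq i x)

end Aux

/-- Proposition 4.2(i): stochastic-order comparisons with a distribution mixture
    force the mixture to be trivial. -/
theorem stmt8 (n : ℕ) (Λ : Matrix (Fin n) (Fin n) ℝ) (hΛ : DoublyStochastic Λ)
    (F : Fin n → Measure ℝ) (hF : ∀ i, IsProbabilityMeasure (F i)) :
    ((∀ i, StOrder (distMix Λ F i) (F i)) ↔ (∀ i, distMix Λ F i = F i)) ∧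
      ((∀ i, StOrder (F i) (distMix Λ F i)) ↔ (∀ i, distMix Λ F i = F i)) := by
  constructor
  · constructor
    · intro h i
      refine key_eq Λ hΛ F hF (Or.inr fun i x => ?_) i
      haveI := hF i
      exact ENNReal.toReal_mono (distMix_ne_top Λ F hF i _) (h i x)
    · intro h i x
      rw [h i]
  · constructor
    · intro h i
      refine key_eq Λ hΛ F hF (Or.inl fun i x => ?_) i
      exact ENNReal.toReal_mono (measure_ne_top _ _) (h i x)
    · intro h i x
      rw [h i]


end
end
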